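/- arXiv:1306.1457 — 13 statements merged into one kernel-verified Lean document; each statement's English description precedes it below -/
import Mathlib

section
/- Let ω ≥ 1 be a natural number and n₀ a natural number. Suppose the real sequence (a_n) is Z(2ω−1)-monotonously decreasing for n ≥ n₀ (i.e. a_{n+2ω−1} ≤ a_n for all n ≥ n₀) and a_n → 0 as n → ∞. Then the series ∑_{n=n₀}^∞ (−1)^n a_n converges. -/
open Filter

/-- Generalized Leibniz theorem: if `(a n)` is `Z(2ω-1)`-monotonously decreasing
for `n ≥ n₀` and `a n → 0`, then `∑_{n=n₀}^∞ (-1)^n a n` converges. -/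
theorem generalized_leibniz_convergence
    (ω n₀ : ℕ) (hω : 1 ≤ ω) (a : ℕ → ℝ)
    (hZ : ∀ n, n₀ ≤ n → a (n + (2 * ω - 1)) ≤ a n)
    (ha : Tendsto a atTop (nhds 0)) :
    ∃ S : ℝ, Tendsto (fun m => ∑ n ∈ Finset.Icc n₀ m, (-1 : ℝ) ^ n * a n)
      atTop (nhds S) := by
  set p := 2 * ω - 1 with hp
  have hp1 : 1 ≤ p := by omega
  have hpodd : Odd p := ⟨ω - 1, by omega⟩
  set f : ℕ → ℝ := fun n => (-1 : ℝ) ^ n * a n with hf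
  -- subsequences
  set b : ℕ → ℕ → ℝ := fun r k => a (n₀ + r + k * p) with hb
  have hbanti : ∀ r, Antitone (b r) := by
    intro r
    apply antitone_nat_of_succ_le
    intro k
    have := hZ (n₀ + r + k * p) (by omega)
    simpa [hb, add_mul, one_mul, ← add_assoc] using this
  have hbtend : ∀ r, Tendsto (b r) atTop (nhds 0) := by
    intro r
    apply ha.comp
    apply tendsto_atTop_mono (f := id) (fun k => ?_) tendsto_id
    have : k ≤ k * p := Nat.le_mul_of_pos_right k (by omega)
    simp only [id]; omega
  have hL : ∀ r, ∃ l, Tendsto (fun K => ∑ k ∈ Finset.range K, (-1 : ℝ) ^ k * b r k)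
      atTop (nhds l) := fun r => (hbanti r).tendsto_alternating_series_of_tendsto_zero (hbtend r)
  choose L hLt using hL
  -- T r K : partial sums of the r-th subseries with true signs
  have hsign : ∀ r k, ((-1 : ℝ)) ^ (n₀ + r + k * p) = (-1 : ℝ) ^ (n₀ + r) * (-1 : ℝ) ^ k := by
    intro r k
    rw [pow_add, pow_mul', hpodd.neg_one_pow]
  have hTt : ∀ r, Tendsto (fun K => ∑ k ∈ Finset.range K, f (n₀ + r + k * p))
      atTop (nhds ((-1 : ℝ) ^ (n₀ + r) * L r)) := by
    intro r
    have : (fun K => ∑ k ∈ Finset.range K, f (n₀ + r + k * p))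
        = fun K => (-1 : ℝ) ^ (n₀ + r) * ∑ k ∈ Finset.range K, (-1 : ℝ) ^ k * b r k := by
      funext K
      rw [Finset.mul_sum]
      refine Finset.sum_congr rfl fun k _ => ?_
      rw [hf]; simp only []
      rw [hsign r k, hb]
      ring
    rw [this]
    exact ((hLt r).const_mul _)
  -- counting function
  set c : ℕ → ℕ → ℕ := fun r m => if n₀ + r ≤ m then (m - n₀ - r) / p + 1 else 0 with hc
  -- reindexing identity
  have key : ∀ m, ∑ n ∈ Finset.Icc n₀ m, f n
      = ∑ r ∈ Finset.range p, ∑ k ∈ Finset.range (c r m), f (n₀ + r + k * p) := by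
    intro m
    rw [Finset.sum_sigma']
    refine Finset.sum_nbij' (fun n => ⟨(n - n₀) % p, (n - n₀) / p⟩)
      (fun rk => n₀ + rk.1 + rk.2 * p) ?_ ?_ ?_ ?_ ?_
    · intro n hn
      simp only [Finset.mem_Icc] at hn
      obtain ⟨h1, h2⟩ := hn
      have hdm : (n - n₀) / p * p + (n - n₀) % p = n - n₀ := Nat.div_add_mod' _ _
      simp only [Finset.mem_sigma, Finset.mem_range, hc]
      refine ⟨Nat.mod_lt _ (by omega), ?_⟩
      rw [if_pos (by omega), Nat.lt_succ_iff, Nat.le_div_iff_mul_le (by omega : 0 < p)]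
      omega
    · intro rk hrk
      simp only [Finset.mem_sigma, Finset.mem_range, hc] at hrk
      obtain ⟨hr, hk⟩ := hrk
      by_cases hle : n₀ + rk.1 ≤ m
      · rw [if_pos hle, Nat.lt_succ_iff, Nat.le_div_iff_mul_le (by omega : 0 < p)] at hk
        simp only [Finset.mem_Icc]
        omega
      · rw [if_neg hle] at hk; omega
    · intro n hn
      simp only [Finset.mem_Icc] at hn
      have hdm : (n - n₀) / p * p + (n - n₀) % p = n - n₀ := Nat.div_add_mod' _ _
      show n₀ + (n - n₀) % p + (n - n₀) / p * p = n
      omega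
    · intro rk hrk
      simp only [Finset.mem_sigma, Finset.mem_range] at hrk
      have h1 : (n₀ + rk.1 + rk.2 * p - n₀) = rk.1 + rk.2 * p := by omega
      show (⟨_, _⟩ : (_ : ℕ) × ℕ) = rk
      ext
      · simp only [h1]
        rw [Nat.add_mul_mod_self_right, Nat.mod_eq_of_lt hrk.1]
      · simp only [h1]
        rw [Nat.add_mul_div_right _ _ (by omega : 0 < p), Nat.div_eq_of_lt hrk.1, zero_add]
    · intro n hn
      simp only [Finset.mem_Icc] at hn
      have hdm : (n - n₀) / p * p + (n - n₀) % p = n - n₀ := Nat.div_add_mod' _ _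
      have h1 : n₀ + (n - n₀) % p + (n - n₀) / p * p = n := by omega
      show f n = f (n₀ + (n - n₀) % p + (n - n₀) / p * p)
      rw [h1]
  -- c r tends to atTop
  have hct : ∀ r, Tendsto (c r) atTop atTop := by
    intro r
    rw [tendsto_atTop_atTop]
    intro K
    refine ⟨n₀ + r + K * p, fun m hm => ?_⟩
    rw [hc]
    simp only []
    rw [if_pos (by omega)]
    have : K * p / p ≤ (m - n₀ - r) / p := Nat.div_le_div_right (by omega)
    rw [Nat.mul_div_cancel K (by omega : 0 < p)] at this
    omega
  refine ⟨∑ r ∈ Finset.range p, (-1 : ℝ) ^ (n₀ + r) * L r, ?_⟩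
  have : (fun m => ∑ n ∈ Finset.Icc n₀ m, (-1 : ℝ) ^ n * a n)
      = fun m => ∑ r ∈ Finset.range p, ∑ k ∈ Finset.range (c r m), f (n₀ + r + k * p) := by
    funext m; exact key m
  rw [this]
  exact tendsto_finset_sum _ fun r _ => (hTt r).comp (hct r)
end

section
/- Let ω ≥ 1 and suppose the real sequence (a_n) is Z(2ω−1)-monotonously decreasing for n ≥ n₀ and a_n → 0 as n → ∞, so that S = ∑_{n=n₀}^∞ (−1)^n a_n converges. Then for every m ≥ n₀ the remainder R_m = S − S_m, where S_m = ∑_{n=n₀}^m (−1)^n a_n, satisfies |R_m| ≤ ∑_{n=m+1}^{m+2ω−1} a_n. -/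
open Filter

lemma alt_partial_bound (b : ℕ → ℝ) (hb0 : ∀ j, 0 ≤ b j) (hbd : ∀ j, b (j+1) ≤ b j) :
    ∀ K, |∑ j ∈ Finset.range K, (-1:ℝ)^j * b j| ≤ b 0 := by
  set A : ℕ → ℝ := fun K => ∑ j ∈ Finset.range K, (-1:ℝ)^j * b j with hA
  have key : ∀ K, 0 ≤ A K ∧ A K ≤ b 0 ∧ 0 ≤ A K + (-1:ℝ)^K * b K ∧
      A K + (-1:ℝ)^K * b K ≤ b 0 := by
    intro K
    induction K with
    | zero => simp [hA]; exact hb0 0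
    | succ K ih =>
      obtain ⟨h1, h2, h3, h4⟩ := ih
      have hAs : A (K+1) = A K + (-1:ℝ)^K * b K := by
        simp [hA, Finset.sum_range_succ]
      rcases Nat.even_or_odd K with he | ho
      · have e1 : (-1:ℝ)^K = 1 := he.neg_one_pow
        have e2 : (-1:ℝ)^(K+1) = -1 := by rw [pow_succ, e1]; ring
        rw [hAs, e1, e2]
        have := hbd K
        have := hb0 (K+1)
        rw [e1] at h3 h4
        refine ⟨by linarith, by linarith, by linarith, by linarith⟩
      · have e1 : (-1:ℝ)^K = -1 := ho.neg_one_pow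
        have e2 : (-1:ℝ)^(K+1) = 1 := by rw [pow_succ, e1]; ring
        rw [hAs, e1, e2]
        have := hbd K
        have := hb0 (K+1)
        rw [e1] at h3 h4
        refine ⟨by linarith, by linarith, by linarith, by linarith⟩
  intro K
  obtain ⟨h1, h2, _, _⟩ := key K
  rw [abs_le]; exact ⟨by linarith, h2⟩

lemma block_split (g : ℕ → ℝ) (p : ℕ) :
    ∀ K, ∑ i ∈ Finset.range (K * p), g i
      = ∑ j ∈ Finset.range K, ∑ k ∈ Finset.range p, g (j * p + k) := by
  intro K
  induction K with
  | zero => simp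
  | succ K ih =>
    have h : (K + 1) * p = K * p + p := by ring
    rw [h, Finset.sum_range_add, ih, Finset.sum_range_succ]

/-- Remainder estimate for the generalized Leibniz theorem:
`|S - S_m| ≤ ∑_{n=m+1}^{m+2ω-1} a n` for every `m ≥ n₀`. -/
theorem generalized_leibniz_remainder_sum_bound
    (ω n₀ : ℕ) (hω : 1 ≤ ω) (a : ℕ → ℝ) (S : ℝ)
    (hZ : ∀ n, n₀ ≤ n → a (n + (2 * ω - 1)) ≤ a n)
    (ha : Tendsto a atTop (nhds 0))
    (hS : Tendsto (fun m => ∑ n ∈ Finset.Icc n₀ m, (-1 : ℝ) ^ n * a n)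
      atTop (nhds S)) :
    ∀ m, n₀ ≤ m →
      |S - ∑ n ∈ Finset.Icc n₀ m, (-1 : ℝ) ^ n * a n| ≤
        ∑ n ∈ Finset.Icc (m + 1) (m + (2 * ω - 1)), a n := by
  set p := 2 * ω - 1 with hpdef
  have hp : 1 ≤ p := by omega
  have hodd : Odd p := ⟨ω - 1, by omega⟩
  have hneg : (-1:ℝ)^p = -1 := hodd.neg_one_pow
  -- nonnegativity
  have hpos : ∀ n, n₀ ≤ n → 0 ≤ a n := by
    intro n hn
    have hmono : ∀ t, a (n + t * p) ≤ a n := by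
      intro t
      induction t with
      | zero => simp
      | succ t ih =>
        have h : n + (t + 1) * p = (n + t * p) + p := by ring
        rw [h]
        exact le_trans (hZ _ (le_trans hn (Nat.le_add_right _ _))) ih
    have htend : Tendsto (fun t => a (n + t * p)) atTop (nhds 0) := by
      refine ha.comp (tendsto_atTop_atTop.mpr fun b => ⟨b, fun t ht => ?_⟩)
      calc b ≤ t := ht
        _ = t * 1 := (mul_one t).symm
        _ ≤ t * p := Nat.mul_le_mul_left t hp
        _ ≤ n + t * p := Nat.le_add_left _ _
    exact le_of_tendsto htend (Eventually.of_forall hmono)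
  intro m hm
  set Sm := ∑ n ∈ Finset.Icc n₀ m, (-1 : ℝ) ^ n * a n with hSm
  set T : ℕ → ℝ := fun K => ∑ n ∈ Finset.Icc (m + 1) (m + K * p), (-1 : ℝ) ^ n * a n with hT
  set B := ∑ n ∈ Finset.Icc (m + 1) (m + p), a n with hB
  -- finite bound
  have hbound : ∀ K, |T K| ≤ B := by
    intro K
    have hcount : m + K * p + 1 - (m + 1) = K * p := by omega
    have hTK : T K = ∑ i ∈ Finset.range (K * p), (-1:ℝ)^(m + 1 + i) * a (m + 1 + i) := by
      rw [hT]
      simp only []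
      rw [← Finset.Ico_add_one_right_eq_Icc, Finset.sum_Ico_eq_sum_range, hcount]
    rw [hTK, block_split, Finset.sum_comm]
    have hBr : B = ∑ k ∈ Finset.range p, a (m + 1 + k) := by
      have hc2 : m + p + 1 - (m + 1) = p := by omega
      rw [hB, ← Finset.Ico_add_one_right_eq_Icc, Finset.sum_Ico_eq_sum_range, hc2]
    rw [hBr]
    refine le_trans (Finset.abs_sum_le_sum_abs _ _) (Finset.sum_le_sum fun k _ => ?_)
    -- inner sum for residue k
    set b : ℕ → ℝ := fun j => a (m + 1 + (j * p + k)) with hb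
    have hsign : ∀ j, ((-1:ℝ))^(m + 1 + (j * p + k)) = (-1:ℝ)^(m + 1 + k) * (-1:ℝ)^j := by
      intro j
      have h : m + 1 + (j * p + k) = (m + 1 + k) + p * j := by ring
      rw [h, pow_add, pow_mul, hneg]
    have hrw : (∑ j ∈ Finset.range K, (-1:ℝ)^(m + 1 + (j * p + k)) * a (m + 1 + (j * p + k)))
        = (-1:ℝ)^(m + 1 + k) * ∑ j ∈ Finset.range K, (-1:ℝ)^j * b j := by
      rw [Finset.mul_sum]
      refine Finset.sum_congr rfl fun j _ => ?_
      rw [hsign j, hb]; ring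
    rw [hrw, abs_mul, abs_pow, abs_neg, abs_one, one_pow, one_mul]
    have hb0 : ∀ j, 0 ≤ b j := fun j =>
      hpos _ (le_trans hm (le_trans (Nat.le_succ m) (Nat.le_add_right _ _)))
    have hbd : ∀ j, b (j + 1) ≤ b j := by
      intro j
      have h : m + 1 + ((j + 1) * p + k) = (m + 1 + (j * p + k)) + p := by ring
      rw [hb]
      simp only []
      rw [h]
      exact hZ _ (le_trans hm (le_trans (Nat.le_succ m) (Nat.le_add_right _ _)))
    have := alt_partial_bound b hb0 hbd K
    have hbz : b 0 = a (m + 1 + k) := by simp [hb]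
    rw [hbz] at this
    exact this
  -- limit argument
  have hsub : Tendsto (fun K => m + K * p) atTop atTop := by
    refine tendsto_atTop_atTop.mpr fun b => ⟨b, fun t ht => ?_⟩
    calc b ≤ t := ht
      _ = t * 1 := (mul_one t).symm
      _ ≤ t * p := Nat.mul_le_mul_left t hp
      _ ≤ m + t * p := Nat.le_add_left _ _
  have h1 : Tendsto (fun K => ∑ n ∈ Finset.Icc n₀ (m + K * p), (-1 : ℝ) ^ n * a n)
      atTop (nhds S) := hS.comp hsub
  have hdecomp : ∀ K, ∑ n ∈ Finset.Icc n₀ (m + K * p), (-1 : ℝ) ^ n * a n = Sm + T K := by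
    intro K
    have hcons := Finset.sum_Ico_consecutive (f := fun n => (-1:ℝ)^n * a n)
      (by omega : n₀ ≤ m + 1) (by omega : m + 1 ≤ m + K * p + 1)
    rw [hT, hSm]
    simp only []
    rw [← Finset.Ico_add_one_right_eq_Icc, ← Finset.Ico_add_one_right_eq_Icc (a := n₀),
      ← Finset.Ico_add_one_right_eq_Icc (a := m + 1), ← hcons]
  have h2 : Tendsto T atTop (nhds (S - Sm)) := by
    have := h1.sub (tendsto_const_nhds (x := Sm) (f := atTop))
    simp only [hdecomp] at this
    convert this using 2 with K
    · ring
  have h3 : Tendsto (fun K => |T K|) atTop (nhds |S - Sm|) := h2.abs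
  exact le_of_tendsto h3 (Eventually.of_forall hbound)
end

section
/- Let ω ≥ 1 and suppose the real sequence (a_n) is Z(2ω−1)-monotonously decreasing for n ≥ n₀ and a_n → 0 as n → ∞, so that S = ∑_{n=n₀}^∞ (−1)^n a_n converges. Then for every m ≥ n₀ there exist real numbers θ_1, ..., θ_{2ω−1}, each in [0,1], such that S − S_m = ∑_{j=1}^{2ω−1} (−1)^{m+j} θ_j a_{m+j}. -/
open Filter

/-- Exact form of the remainder of a `Z(2ω-1)`-series:
`S - S_m = ∑_{j=1}^{2ω-1} (-1)^{m+j} θ_j a_{m+j}` with `θ_j ∈ [0,1]`. -/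
theorem generalized_leibniz_remainder_theta_form
    (ω n₀ : ℕ) (hω : 1 ≤ ω) (a : ℕ → ℝ) (S : ℝ)
    (hZ : ∀ n, n₀ ≤ n → a (n + (2 * ω - 1)) ≤ a n)
    (ha : Tendsto a atTop (nhds 0))
    (hS : Tendsto (fun m => ∑ n ∈ Finset.Icc n₀ m, (-1 : ℝ) ^ n * a n)
      atTop (nhds S)) :
    ∀ m, n₀ ≤ m →
      ∃ θ : ℕ → ℝ, (∀ j ∈ Finset.Icc 1 (2 * ω - 1), 0 ≤ θ j ∧ θ j ≤ 1) ∧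
        S - ∑ n ∈ Finset.Icc n₀ m, (-1 : ℝ) ^ n * a n =
          ∑ j ∈ Finset.Icc 1 (2 * ω - 1), (-1 : ℝ) ^ (m + j) * θ j * a (m + j) := by
  intro m hm
  set w : ℕ := 2 * ω - 1 with hw_def
  have hw : 1 ≤ w := by omega
  have hwodd : Odd w := ⟨ω - 1, by omega⟩
  have hneg1w : (-1 : ℝ) ^ w = -1 := hwodd.neg_one_pow
  -- subsequences
  set b : ℕ → ℕ → ℝ := fun j k => a (m + j + k * w) with hb_def
  have hb_anti : ∀ j, Antitone (b j) := by
    intro j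
    apply antitone_nat_of_succ_le
    intro k
    have h1 : m + j + (k + 1) * w = (m + j + k * w) + w := by ring
    have := hZ (m + j + k * w) (by omega)
    simpa [hb_def, h1] using this
  have hb_tendsto : ∀ j, Tendsto (b j) atTop (nhds 0) := by
    intro j
    apply ha.comp
    apply tendsto_atTop_mono (fun k => ?_) tendsto_id
    calc (id k : ℕ) = k := rfl
      _ ≤ k * w := Nat.le_mul_of_pos_right _ (by omega)
      _ ≤ m + j + k * w := Nat.le_add_left _ _
  -- alternating subseries limits
  have hT : ∀ j : ℕ, ∃ l : ℝ,
      Tendsto (fun K => ∑ k ∈ Finset.range K, (-1 : ℝ) ^ k * b j k) atTop (nhds l) ∧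
      0 ≤ l ∧ l ≤ a (m + j) := by
    intro j
    obtain ⟨l, hl⟩ := (hb_anti j).tendsto_alternating_series_of_tendsto_zero (hb_tendsto j)
    refine ⟨l, hl, ?_, ?_⟩
    · have := (hb_anti j).alternating_series_le_tendsto hl 0
      simpa using this
    · have := (hb_anti j).tendsto_le_alternating_series hl 0
      have hb0 : b j 0 = a (m + j) := by simp [hb_def]
      simpa [hb0] using this
  choose T hT1 hT2 hT3 using hT
  -- key finite identity
  have key : ∀ K : ℕ, ∑ n ∈ Finset.Ioc m (m + K * w), (-1 : ℝ) ^ n * a n =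
      ∑ j ∈ Finset.Icc 1 w, (-1 : ℝ) ^ (m + j) *
        (∑ k ∈ Finset.range K, (-1 : ℝ) ^ k * b j k) := by
    intro K
    induction K with
    | zero => simp
    | succ K ih =>
      have h1 : m ≤ m + K * w := by omega
      have h2 : m + K * w ≤ m + (K + 1) * w :=
        Nat.add_le_add_left (mul_le_mul_left (Nat.le_succ K) w) m
      rw [← Finset.sum_Ioc_consecutive _ h1 h2, ih]
      have hblock : ∑ n ∈ Finset.Ioc (m + K * w) (m + (K + 1) * w), (-1 : ℝ) ^ n * a n =
          ∑ j ∈ Finset.Icc 1 w, (-1 : ℝ) ^ (m + j) * ((-1 : ℝ) ^ K * b j K) := by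
        have hmap : Finset.Ioc (m + K * w) (m + (K + 1) * w) =
            Finset.map (addLeftEmbedding (m + K * w)) (Finset.Ioc 0 w) := by
          rw [Finset.map_add_left_Ioc]
          congr 1
          ring
        rw [hmap, Finset.sum_map]
        have hIoc : Finset.Ioc 0 w = Finset.Icc 1 w := by
          ext x; simp; omega
        rw [hIoc]
        apply Finset.sum_congr rfl
        intro j hj
        have hje : addLeftEmbedding (m + K * w) j = m + K * w + j := rfl
        rw [hje]
        have hidx : m + K * w + j = m + j + K * w := by ring
        have hpow : (-1 : ℝ) ^ (m + K * w + j) = (-1 : ℝ) ^ (m + j) * (-1 : ℝ) ^ K := by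
          rw [show m + K * w + j = (m + j) + w * K by ring, pow_add, pow_mul, hneg1w]
        rw [hpow, hidx]
        simp only [hb_def]
        ring
      rw [hblock, ← Finset.sum_add_distrib]
      apply Finset.sum_congr rfl
      intro j _
      rw [Finset.sum_range_succ]
      ring
  -- limit identity : S = S_m + ∑_j (-1)^(m+j) T j
  set Sm : ℝ := ∑ n ∈ Finset.Icc n₀ m, (-1 : ℝ) ^ n * a n with hSm_def
  have hsplit : ∀ K : ℕ, ∑ n ∈ Finset.Icc n₀ (m + K * w), (-1 : ℝ) ^ n * a n =
      Sm + ∑ n ∈ Finset.Ioc m (m + K * w), (-1 : ℝ) ^ n * a n := by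
    intro K
    rw [hSm_def, ← Finset.sum_union]
    · congr 1
      ext x
      simp only [Finset.mem_union, Finset.mem_Icc, Finset.mem_Ioc]
      omega
    · simp only [Finset.disjoint_left, Finset.mem_Icc, Finset.mem_Ioc]
      omega
  have htendsto_idx : Tendsto (fun K : ℕ => m + K * w) atTop atTop := by
    apply tendsto_atTop_mono (fun K => ?_) tendsto_id
    calc (id K : ℕ) = K := rfl
      _ ≤ K * w := Nat.le_mul_of_pos_right _ (by omega)
      _ ≤ m + K * w := Nat.le_add_left _ _
  have hP : Tendsto (fun K : ℕ => ∑ n ∈ Finset.Icc n₀ (m + K * w), (-1 : ℝ) ^ n * a n)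
      atTop (nhds S) := hS.comp htendsto_idx
  have hQ : Tendsto (fun K : ℕ => ∑ n ∈ Finset.Icc n₀ (m + K * w), (-1 : ℝ) ^ n * a n)
      atTop (nhds (Sm + ∑ j ∈ Finset.Icc 1 w, (-1 : ℝ) ^ (m + j) * T j)) := by
    simp only [hsplit, key]
    apply Tendsto.const_add
    exact tendsto_finset_sum _ fun j _ => (hT1 j).const_mul _
  have hSeq : S = Sm + ∑ j ∈ Finset.Icc 1 w, (-1 : ℝ) ^ (m + j) * T j :=
    tendsto_nhds_unique hP hQ
  -- define θ
  refine ⟨fun j => if a (m + j) = 0 then 0 else T j / a (m + j), ?_, ?_⟩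
  · intro j _
    by_cases h : a (m + j) = 0
    · simp [h]
    · have hpos : 0 < a (m + j) := lt_of_le_of_ne (le_trans (hT2 j) (hT3 j)) (Ne.symm h)
      simp only [h, if_false]
      constructor
      · exact div_nonneg (hT2 j) hpos.le
      · rw [div_le_one hpos]
        exact hT3 j
  · rw [hSeq]
    ring_nf
    apply Finset.sum_congr rfl
    intro j _
    by_cases h : a (m + j) = 0
    · have hT0 : T j = 0 := le_antisymm (h ▸ hT3 j) (hT2 j)
      simp [h, hT0]
    · simp only [h, if_false]
      field_simp
end

section
/- Let f : ℝ → ℝ and x₀ ∈ ℝ. Suppose f is Zv-monotonously decreasing on [x₀, ∞), i.e. there exists T > 0 such that f(x+T+τ) ≤ f(x) for all x ≥ x₀ and all τ > 0, and suppose f(x) → 0 as x → +∞. Then for any natural number n₀ ≥ x₀, the series ∑_{n=n₀}^∞ (−1)^n f(n) converges. -/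
open Filter

/-- Key divisibility equivalence. -/
lemma div_count_iff (K L r i : ℕ) (hK : 0 < K) (hr : r < K) :
    r + K * i < L ↔ i < (L + (K - 1) - r) / K := by
  rw [show (i < (L + (K - 1) - r) / K) ↔ (i + 1 ≤ (L + (K - 1) - r) / K) from Iff.rfl,
    Nat.le_div_iff_mul_le hK, show (i + 1) * K = K * i + K by ring]
  generalize K * i = a
  omega

/-- Group a sum over `range L` by residues mod `K`. -/
lemma sum_range_group (K : ℕ) (hK : 0 < K) (h : ℕ → ℝ) (L : ℕ) :
    ∑ j ∈ Finset.range L, h j =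
      ∑ r ∈ Finset.range K,
        ∑ i ∈ Finset.range ((L + (K - 1) - r) / K), h (r + K * i) := by
  rw [Finset.sum_sigma']
  symm
  refine Finset.sum_nbij' (fun p => p.1 + K * p.2) (fun j => ⟨j % K, j / K⟩)
    ?_ ?_ ?_ ?_ ?_
  · rintro ⟨r, i⟩ hp
    simp only [Finset.mem_sigma, Finset.mem_range] at hp
    simp only [Finset.mem_range]
    exact (div_count_iff K L r i hK hp.1).mpr hp.2
  · intro j hj
    simp only [Finset.mem_range] at hj
    simp only [Finset.mem_sigma, Finset.mem_range]
    refine ⟨Nat.mod_lt _ hK, ?_⟩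
    refine (div_count_iff K L (j % K) (j / K) hK (Nat.mod_lt _ hK)).mp ?_
    rwa [Nat.mod_add_div]
  · rintro ⟨r, i⟩ hp
    simp only [Finset.mem_sigma, Finset.mem_range] at hp
    have h1 : (r + K * i) % K = r := by
      rw [Nat.add_mul_mod_self_left, Nat.mod_eq_of_lt hp.1]
    have h2 : (r + K * i) / K = i := by
      rw [Nat.add_mul_div_left _ _ hK, Nat.div_eq_of_lt hp.1, Nat.zero_add]
    simp only [h1, h2]
  · intro j _
    simp only
    rw [Nat.mod_add_div]
  · rintro ⟨r, i⟩ _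
    rfl

/-- If `f` is `Zv`-monotonously decreasing on `[x₀, ∞)` and `f(x) → 0` as
`x → +∞`, then the alternating series `∑_{n=n₀}^∞ (-1)^n f(n)` converges. -/
theorem Zv_monotone_alternating_series_converges
    (f : ℝ → ℝ) (x₀ : ℝ)
    (hZv : ∃ T : ℝ, 0 < T ∧ ∀ x : ℝ, x₀ ≤ x → ∀ τ : ℝ, 0 < τ →
      f (x + T + τ) ≤ f x)
    (hf : Tendsto f atTop (nhds 0))
    (n₀ : ℕ) (hn₀ : x₀ ≤ (n₀ : ℝ)) :
    ∃ S : ℝ, Tendsto (fun m => ∑ n ∈ Finset.Icc n₀ m, (-1 : ℝ) ^ n * f n)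
      atTop (nhds S) := by
  obtain ⟨T, hT, hmono⟩ := hZv
  set K : ℕ := 2 * ⌈T⌉₊ + 1 with hKdef
  have hK : 0 < K := by omega
  have hKT : T < (K : ℝ) := by
    have h1 : T ≤ (⌈T⌉₊ : ℝ) := Nat.le_ceil T
    have h2 : ((⌈T⌉₊ : ℕ) : ℝ) < (K : ℝ) := by
      exact_mod_cast (by omega : ⌈T⌉₊ < K)
    linarith
  have hKodd : (-1 : ℝ) ^ K = -1 := Odd.neg_one_pow ⟨⌈T⌉₊, by omega⟩
  -- the residue subsequences
  set u : ℕ → ℕ → ℝ := fun r i => f ((n₀ + r + K * i : ℕ) : ℝ) with hu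
  have hx₀ : ∀ r i : ℕ, x₀ ≤ ((n₀ + r + K * i : ℕ) : ℝ) := by
    intro r i
    have h1 : (n₀ : ℝ) ≤ ((n₀ + r + K * i : ℕ) : ℝ) := by
      exact_mod_cast (by rw [add_assoc]; exact Nat.le_add_right _ _ :
        n₀ ≤ n₀ + r + K * i)
    linarith
  have hanti : ∀ r, Antitone (u r) := by
    intro r
    apply antitone_nat_of_succ_le
    intro i
    have hkey : ((n₀ + r + K * (i + 1) : ℕ) : ℝ)
        = ((n₀ + r + K * i : ℕ) : ℝ) + T + ((K : ℝ) - T) := by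
      push_cast; ring
    show f ((n₀ + r + K * (i + 1) : ℕ) : ℝ) ≤ f ((n₀ + r + K * i : ℕ) : ℝ)
    rw [hkey]
    exact hmono _ (hx₀ r i) _ (by linarith)
  have htend : ∀ r, Tendsto (u r) atTop (nhds 0) := by
    intro r
    apply hf.comp
    apply tendsto_natCast_atTop_atTop.comp
    apply tendsto_atTop_mono (fun i => ?_) tendsto_id
    show i ≤ n₀ + r + K * i
    calc i ≤ K * i := Nat.le_mul_of_pos_left i hK
    _ ≤ n₀ + r + K * i := Nat.le_add_left _ _
  have hexists : ∀ r, ∃ l : ℝ,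
      Tendsto (fun c => ∑ i ∈ Finset.range c, (-1 : ℝ) ^ i * u r i)
        atTop (nhds l) :=
    fun r => (hanti r).tendsto_alternating_series_of_tendsto_zero (htend r)
  choose l hl using hexists
  refine ⟨∑ r ∈ Finset.range K, (-1 : ℝ) ^ (n₀ + r) * l r, ?_⟩
  -- counting function
  set cnt : ℕ → ℕ → ℕ := fun r m => ((m + 1 - n₀) + (K - 1) - r) / K with hcnt
  -- partial sum identity
  have hident : ∀ m : ℕ, ∑ n ∈ Finset.Icc n₀ m, (-1 : ℝ) ^ n * f n
      = ∑ r ∈ Finset.range K, (-1 : ℝ) ^ (n₀ + r) *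
          ∑ i ∈ Finset.range (cnt r m), (-1 : ℝ) ^ i * u r i := by
    intro m
    rw [← Finset.Ico_add_one_right_eq_Icc, Finset.sum_Ico_eq_sum_range,
      sum_range_group K hK
        (fun j => (-1 : ℝ) ^ (n₀ + j) * f ((n₀ + j : ℕ) : ℝ)) (m + 1 - n₀)]
    refine Finset.sum_congr rfl fun r _ => ?_
    rw [Finset.mul_sum]
    refine Finset.sum_congr rfl fun i _ => ?_
    have hsign : (-1 : ℝ) ^ (n₀ + (r + K * i))
        = (-1 : ℝ) ^ (n₀ + r) * (-1 : ℝ) ^ i := by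
      rw [← add_assoc, pow_add, pow_mul, hKodd]
    rw [hsign]
    have harg : ((n₀ + (r + K * i) : ℕ) : ℝ) = ((n₀ + r + K * i : ℕ) : ℝ) := by
      push_cast; ring
    rw [harg]
    show (-1 : ℝ) ^ (n₀ + r) * (-1 : ℝ) ^ i * u r i
      = (-1 : ℝ) ^ (n₀ + r) * ((-1 : ℝ) ^ i * u r i)
    ring
  have hfun : (fun m => ∑ n ∈ Finset.Icc n₀ m, (-1 : ℝ) ^ n * f n)
      = fun m => ∑ r ∈ Finset.range K, (-1 : ℝ) ^ (n₀ + r) *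
          ∑ i ∈ Finset.range (cnt r m), (-1 : ℝ) ^ i * u r i :=
    funext hident
  rw [hfun]
  apply tendsto_finset_sum
  intro r hr
  simp only [Finset.mem_range] at hr
  refine Tendsto.const_mul _ ((hl r).comp ?_)
  rw [tendsto_atTop_atTop]
  intro b
  refine ⟨n₀ + r + K * b, fun m hm => ?_⟩
  show b ≤ ((m + 1 - n₀) + (K - 1) - r) / K
  rw [Nat.le_div_iff_mul_le hK, mul_comm]
  revert hm
  generalize K * b = a
  intro hm
  omega
end

section
/- Let 0 < α ≤ 1, M > 0, and let p : ℝ → ℝ satisfy |p(x)| ≤ M for all x. Define f(x) = x^α + p(x)·x^{α−1} for x > 0. Then f is Zv-monotonously increasing on some ray: there exist T > 0 and x₀ > 0 such that for all x ≥ x₀ and all τ > 0, f(x+T+τ) ≥ f(x). -/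
open Filter

/-- For `0 < α ≤ 1` and bounded `p`, the function `f(x) = x^α + p(x)·x^(α-1)`
is `Zv`-monotonously increasing on some ray `[x₀, ∞)`. -/
theorem Zv_monotone_increasing_rpow_perturbation
    (α M : ℝ) (hα0 : 0 < α) (hα1 : α ≤ 1) (hM : 0 < M)
    (p : ℝ → ℝ) (hp : ∀ x : ℝ, |p x| ≤ M) :
    ∃ T : ℝ, 0 < T ∧ ∃ x₀ : ℝ, 0 < x₀ ∧ ∀ x : ℝ, x₀ ≤ x → ∀ τ : ℝ, 0 < τ →
      x ^ α + p x * x ^ (α - 1) ≤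
        (x + T + τ) ^ α + p (x + T + τ) * (x + T + τ) ^ (α - 1) := by
  -- a mean value theorem consequence
  have mvt : ∀ x y : ℝ, 0 < x → x < y →
      α * y ^ (α - 1) * (y - x) ≤ y ^ α - x ^ α := by
    intro x y hx hxy
    obtain ⟨c, hc, hceq⟩ := exists_hasDerivAt_eq_slope (fun t => t ^ α)
      (fun t => α * t ^ (α - 1)) hxy
      (fun t ht => (Real.continuousAt_rpow_const t α
        (Or.inl (lt_of_lt_of_le hx ht.1).ne')).continuousWithinAt)
      (fun t ht => Real.hasDerivAt_rpow_const (Or.inl (hx.trans ht.1).ne'))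
    have hc1 : y ^ (α - 1) ≤ c ^ (α - 1) :=
      Real.rpow_le_rpow_of_nonpos (hx.trans hc.1) hc.2.le (by linarith)
    have hyx : (0:ℝ) < y - x := by linarith
    have : α * c ^ (α - 1) * (y - x) = y ^ α - x ^ α := by
      field_simp at hceq
      linarith [hceq]
    have h := mul_le_mul_of_nonneg_right (mul_le_mul_of_nonneg_left hc1 hα0.le) hyx.le
    linarith
  -- monotonicity of g(t) = t^α - M t^(α-1)
  have gmono : ∀ x y : ℝ, 0 < x → x ≤ y →
      x ^ α - M * x ^ (α - 1) ≤ y ^ α - M * y ^ (α - 1) := by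
    intro x y hx hxy
    have h1 : x ^ α ≤ y ^ α := Real.rpow_le_rpow hx.le hxy hα0.le
    have h2 : y ^ (α - 1) ≤ x ^ (α - 1) :=
      Real.rpow_le_rpow_of_nonpos hx hxy (by linarith)
    nlinarith
  refine ⟨4 * M / α, by positivity, 4 * M / α, by positivity, fun x hx τ hτ => ?_⟩
  set T : ℝ := 4 * M / α with hT
  have hT0 : 0 < T := by positivity
  have hx0 : 0 < x := lt_of_lt_of_le hT0 hx
  have hxT : 0 < x + T := by linarith
  have hy : 0 < x + T + τ := by linarith
  have hx1 : (0:ℝ) < x ^ (α - 1) := Real.rpow_pos_of_pos hx0 _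
  have hxT1 : (0:ℝ) < (x + T) ^ (α - 1) := Real.rpow_pos_of_pos hxT _
  have hy1 : (0:ℝ) < (x + T + τ) ^ (α - 1) := Real.rpow_pos_of_pos hy _
  -- key : (x+T)^α - x^α ≥ 2 M x^(α-1)
  have hkey : 2 * M * x ^ (α - 1) ≤ (x + T) ^ α - x ^ α := by
    have h1 := mvt x (x + T) hx0 (by linarith)
    have h2 : (2 * x) ^ (α - 1) ≤ (x + T) ^ (α - 1) :=
      Real.rpow_le_rpow_of_nonpos hxT (by linarith) (by linarith)
    have h3 : (2 * x) ^ (α - 1) = 2 ^ (α - 1) * x ^ (α - 1) :=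
      Real.mul_rpow (by norm_num) hx0.le
    have h4 : (2:ℝ)⁻¹ ≤ 2 ^ (α - 1) := by
      have := Real.rpow_le_rpow_of_exponent_le (one_le_two) (show α - 1 ≤ α - 1 from le_rfl)
      have h5 : (2:ℝ) ^ (-1:ℝ) ≤ 2 ^ (α - 1) :=
        Real.rpow_le_rpow_of_exponent_le one_le_two (by linarith)
      rwa [Real.rpow_neg_one] at h5
    have hαT : α * T = 4 * M := by
      rw [hT]; field_simp
    have h6 : (2:ℝ)⁻¹ * x ^ (α - 1) ≤ (x + T) ^ (α - 1) := by
      calc (2:ℝ)⁻¹ * x ^ (α - 1) ≤ 2 ^ (α - 1) * x ^ (α - 1) := by nlinarith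
        _ = (2 * x) ^ (α - 1) := h3.symm
        _ ≤ (x + T) ^ (α - 1) := h2
    have h7 : α * ((2:ℝ)⁻¹ * x ^ (α - 1)) * T ≤ α * (x + T) ^ (α - 1) * T := by
      nlinarith [hα0.le, hT0.le]
    have h8 : α * ((2:ℝ)⁻¹ * x ^ (α - 1)) * T = 2 * M * x ^ (α - 1) := by
      field_simp [hT]; ring_nf; linarith [hαT]
    have h9 : α * (x + T) ^ (α - 1) * (x + T - x) = α * (x + T) ^ (α - 1) * T := by
      ring_nf
    linarith [h1, h7, h8 ▸ h7]
  have hxT1le : (x + T) ^ (α - 1) ≤ x ^ (α - 1) :=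
    Real.rpow_le_rpow_of_nonpos hx0 (by linarith) (by linarith)
  have hg := gmono (x + T) (x + T + τ) hxT (by linarith)
  have hpx : p x ≤ M := (abs_le.mp (hp x)).2
  have hpy : -M ≤ p (x + T + τ) := (abs_le.mp (hp (x + T + τ))).1
  have b1 : p x * x ^ (α - 1) ≤ M * x ^ (α - 1) := by nlinarith
  have b2 : -M * (x + T + τ) ^ (α - 1) ≤ p (x + T + τ) * (x + T + τ) ^ (α - 1) := by nlinarith
  nlinarith [hkey, hxT1le, hg, hM.le]
end

section
/- Let 0 ≤ β < 1, M > 0, and let p : ℕ → ℝ satisfy |p(n)| ≤ M for all n. Then for any natural number n₀ > M, the series ∑_{n=n₀}^∞ (−1)^n · n^β / (n + p(n)) converges. -/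
open Filter Finset

/-- For `0 ≤ β < 1` and `p` bounded by `M`, the series
`∑_{n=n₀}^∞ (-1)^n · n^β / (n + p(n))` converges whenever `n₀ > M`. -/
theorem alternating_rpow_perturbed_series_converges
    (β M : ℝ) (hβ0 : 0 ≤ β) (hβ1 : β < 1) (hM : 0 < M)
    (p : ℕ → ℝ) (hp : ∀ n : ℕ, |p n| ≤ M)
    (n₀ : ℕ) (hn₀ : M < (n₀ : ℝ)) :
    ∃ S : ℝ, Tendsto
      (fun m => ∑ n ∈ Finset.Icc n₀ m, (-1 : ℝ) ^ n * (n : ℝ) ^ β / ((n : ℝ) + p n))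
      atTop (nhds S) := by
  set f : ℕ → ℝ := fun n => (-1 : ℝ) ^ n * (n : ℝ) ^ β / ((n : ℝ) + p n) with hfdef
  set g : ℕ → ℝ := fun n => (-1 : ℝ) ^ n * (n : ℝ) ^ (β - 1) with hgdef
  set h : ℕ → ℝ := fun n => f n - g n with hhdef
  have hn₀posR : (0:ℝ) < n₀ := hM.trans hn₀
  have hn₀pos : 0 < n₀ := by exact_mod_cast hn₀posR
  have hβ1' : β - 1 < 0 := by linarith
  -- convergence of partial sums of g
  set a : ℕ → ℝ := fun n => if n = 0 then 1 else (n:ℝ) ^ (β - 1) with hadef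
  have ha_anti : Antitone a := by
    apply antitone_nat_of_succ_le
    intro n
    cases n with
    | zero => simp [hadef]
    | succ k =>
        simp only [hadef, Nat.succ_ne_zero, if_false]
        exact Real.rpow_le_rpow_of_nonpos (by positivity)
          (by push_cast; linarith) hβ1'.le
  have ha_zero : Tendsto a atTop (nhds 0) := by
    have h1 : Tendsto (fun x : ℝ => x ^ (-(1 - β))) atTop (nhds 0) :=
      tendsto_rpow_neg_atTop (by linarith)
    have h2 : Tendsto (fun n : ℕ => ((n:ℝ)) ^ (-(1 - β))) atTop (nhds 0) :=
      h1.comp tendsto_natCast_atTop_atTop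
    apply h2.congr'
    filter_upwards [eventually_ge_atTop 1] with n hn
    have : n ≠ 0 := by omega
    simp [hadef, this]
  obtain ⟨l, hl⟩ := ha_anti.tendsto_alternating_series_of_tendsto_zero ha_zero
  have hg_tends : Tendsto (fun m => ∑ i ∈ range m, g i) atTop (nhds (l - 1)) := by
    have := hl.sub_const 1
    apply this.congr'
    filter_upwards [eventually_ge_atTop 1] with m hm
    obtain ⟨k, rfl⟩ : ∃ k, m = k + 1 := ⟨m - 1, by omega⟩
    rw [Finset.sum_range_succ' (fun i => (-1:ℝ)^i * a i), Finset.sum_range_succ' g]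
    have hterm : ∀ i ∈ range k, (-1:ℝ)^(i+1) * a (i+1) = g (i+1) := by
      intro i _
      simp [hadef, hgdef]
    rw [Finset.sum_congr rfl hterm]
    simp [hadef, hgdef, Real.zero_rpow hβ1'.ne]
  -- summability of h
  set c : ℝ := 1 - M / n₀ with hcdef
  have hc : 0 < c := by
    rw [hcdef, sub_pos, div_lt_one hn₀posR]; exact hn₀
  have hbound : ∀ n : ℕ, n₀ ≤ n → |h n| ≤ (M / c) * (n:ℝ) ^ (β - 2) := by
    intro n hn
    have hnR : (n₀:ℝ) ≤ n := by exact_mod_cast hn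
    have hnpos : (0:ℝ) < n := lt_of_lt_of_le hn₀posR hnR
    have hMn : M < (n:ℝ) := lt_of_lt_of_le hn₀ hnR
    have hpn : |p n| ≤ M := hp n
    have hden : (0:ℝ) < (n:ℝ) + p n := by
      have := abs_le.mp hpn
      linarith [this.1]
    have hcn : c * n ≤ (n:ℝ) - M := by
      have hMn' : M ≤ M / n₀ * n := by
        rw [div_mul_eq_mul_div, le_div_iff₀ hn₀posR]
        nlinarith
      rw [hcdef]
      nlinarith
    have hcnpos : (0:ℝ) < c * n := by positivity
    have hnM : (0:ℝ) < (n:ℝ) - M := lt_of_lt_of_le hcnpos hcn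
    -- h n = (-1)^n * n^β * (-(p n)) / (n * (n + p n))
    have hgn : g n = (-1:ℝ)^n * ((n:ℝ)^β / n) := by
      have e : (n:ℝ) ^ (β - 1) = (n:ℝ)^β / n := by
        rw [Real.rpow_sub hnpos, Real.rpow_one]
      show (-1:ℝ)^n * (n:ℝ)^(β-1) = _
      rw [e]
    have hh : h n = (-1:ℝ)^n * ((n:ℝ)^β * (-(p n)) / (((n:ℝ) + p n) * n)) := by
      show f n - g n = _
      rw [hgn]
      show (-1:ℝ)^n * (n:ℝ)^β / ((n:ℝ) + p n) - _ = _
      field_simp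
      ring
    rw [hh, abs_mul, abs_pow, abs_neg, abs_one, one_pow, one_mul, abs_div, abs_mul,
      abs_mul, abs_neg]
    have h1 : |(n:ℝ)^β| = (n:ℝ)^β := abs_of_nonneg (Real.rpow_nonneg hnpos.le _)
    have h2 : |(n:ℝ) + p n| = (n:ℝ) + p n := abs_of_pos hden
    have h3 : |(n:ℝ)| = (n:ℝ) := abs_of_pos hnpos
    rw [h1, h2, h3]
    have hden2 : (n:ℝ) - M ≤ (n:ℝ) + p n := by
      have := abs_le.mp hpn
      linarith [this.1]
    have key : (n:ℝ)^β * |p n| / (((n:ℝ) + p n) * n) ≤ (n:ℝ)^β * M / ((c * n) * n) := by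
      apply div_le_div₀ (by positivity)
      · exact mul_le_mul_of_nonneg_left hpn (Real.rpow_nonneg hnpos.le _)
      · positivity
      · apply mul_le_mul_of_nonneg_right _ hnpos.le
        exact hcn.trans hden2
    refine key.trans (le_of_eq ?_)
    rw [Real.rpow_sub hnpos]
    have : (n:ℝ)^(2:ℝ) = n * n := by
      rw [show (2:ℝ) = (1:ℝ)+1 by norm_num, Real.rpow_add hnpos, Real.rpow_one]
    rw [this]
    field_simp
  have hsummable_bound : Summable (fun n : ℕ => (M / c) * (n:ℝ) ^ (β - 2)) := by
    apply Summable.mul_left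
    rw [Real.summable_nat_rpow]
    linarith
  have hsum_h : Summable h := by
    rw [← summable_nat_add_iff n₀]
    apply Summable.of_abs
    have hb2 : Summable (fun n : ℕ => (M / c) * ((n + n₀ : ℕ):ℝ) ^ (β - 2)) :=
      (summable_nat_add_iff (f := fun n : ℕ => (M / c) * ((n:ℕ):ℝ) ^ (β - 2)) n₀).mpr
        hsummable_bound
    exact Summable.of_nonneg_of_le (fun n => abs_nonneg _)
      (fun n => hbound (n + n₀) (Nat.le_add_left _ _)) hb2
  have hh_tends : Tendsto (fun m => ∑ i ∈ range m, h i) atTop (nhds (∑' i, h i)) :=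
    hsum_h.hasSum.tendsto_sum_nat
  have hf_tends : Tendsto (fun m => ∑ i ∈ range m, f i) atTop (nhds (l - 1 + ∑' i, h i)) := by
    have := hg_tends.add hh_tends
    apply this.congr
    intro m
    rw [← Finset.sum_add_distrib]
    apply Finset.sum_congr rfl
    intro i _
    simp [hhdef]
  refine ⟨(l - 1 + ∑' i, h i) - ∑ i ∈ range n₀, f i, ?_⟩
  have hshift : Tendsto (fun m => ∑ i ∈ range (m+1), f i) atTop
      (nhds (l - 1 + ∑' i, h i)) := hf_tends.comp (tendsto_add_atTop_nat 1)
  have := hshift.sub_const (∑ i ∈ range n₀, f i)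
  apply this.congr'
  filter_upwards [eventually_ge_atTop n₀] with m hm
  rw [← Finset.Ico_add_one_right_eq_Icc, Finset.sum_Ico_eq_sub _ (by omega)]
end

section
/- The series ∑_{n=1}^∞ (−1)^{n−1} / (n + 2·cos n) converges. -/
open Filter Finset

noncomputable def cc (i : ℕ) : ℝ :=
  (-1 : ℝ) ^ i / ((i + 1 : ℕ) + 2 * Real.cos (i + 1 : ℕ)) - (-1 : ℝ) ^ i * (1 / (i + 1 : ℝ))

lemma summable_cc : Summable cc := by
  have hs : Summable (fun i : ℕ => 4 / (i : ℝ) ^ 2) := by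
    simpa [div_eq_mul_inv] using (Real.summable_one_div_nat_pow.mpr one_lt_two).mul_left 4
  refine hs.of_norm_bounded_eventually_nat ?_
  filter_upwards [eventually_ge_atTop 2] with i hi
  have hi2 : (2 : ℝ) ≤ (i : ℝ) := by exact_mod_cast hi
  have hcos : -1 ≤ Real.cos ((i : ℝ) + 1) := Real.neg_one_le_cos _
  have hcos' : Real.cos ((i : ℝ) + 1) ≤ 1 := Real.cos_le_one _
  have hden : (0 : ℝ) < (i : ℝ) + 1 + 2 * Real.cos ((i : ℝ) + 1) := by nlinarith
  have hnpos : (0 : ℝ) < (i : ℝ) + 1 := by positivity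
  have key : |(1 : ℝ) / ((i : ℝ) + 1 + 2 * Real.cos ((i:ℝ)+1)) - 1 / ((i:ℝ)+1)| ≤ 4 / (i:ℝ)^2 := by
    rw [div_sub_div _ _ (ne_of_gt hden) (ne_of_gt hnpos)]
    rw [abs_div]
    rw [abs_of_pos (by positivity : (0:ℝ) < ((i:ℝ)+1+2*Real.cos ((i:ℝ)+1)) * ((i:ℝ)+1))]
    rw [div_le_div_iff₀ (by positivity) (by positivity)]
    have habs : |1 * ((i:ℝ)+1) - ((i:ℝ)+1+2*Real.cos ((i:ℝ)+1)) * 1| ≤ 2 := by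
      rw [abs_le]; constructor <;> nlinarith
    have hd2 : ((i:ℝ)-1) * ((i:ℝ)+1) ≤ ((i:ℝ)+1+2*Real.cos ((i:ℝ)+1)) * ((i:ℝ)+1) := by nlinarith
    nlinarith [abs_nonneg (1 * ((i:ℝ)+1) - ((i:ℝ)+1+2*Real.cos ((i:ℝ)+1)) * 1)]
  have : cc i = (-1:ℝ)^i * (1 / ((i:ℝ)+1+2*Real.cos ((i:ℝ)+1)) - 1/((i:ℝ)+1)) := by
    simp [cc]; push_cast; ring
  rw [this]
  rw [norm_mul, norm_pow]
  simpa using key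

/-- The series `∑_{n=1}^∞ (-1)^(n-1) / (n + 2·cos n)` converges. -/
theorem alternating_cos_series_converges :
    ∃ S : ℝ, Tendsto
      (fun m : ℕ => ∑ n ∈ Finset.Icc 1 m, (-1 : ℝ) ^ (n - 1) / ((n : ℝ) + 2 * Real.cos n))
      atTop (nhds S) := by
  obtain ⟨l, hl⟩ := Antitone.tendsto_alternating_series_of_tendsto_zero
    (f := fun i : ℕ => 1 / (i + 1 : ℝ))
    (fun a b hab => by
      apply one_div_le_one_div_of_le (by positivity)
      have : (a:ℝ) ≤ b := Nat.cast_le.mpr hab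
      linarith)
    tendsto_one_div_add_atTop_nhds_zero_nat
  have hc := summable_cc.hasSum.tendsto_sum_nat
  refine ⟨l + ∑' i, cc i, ?_⟩
  have := hl.add hc
  have heq : ∀ m : ℕ, (∑ n ∈ Finset.Icc 1 m, (-1 : ℝ) ^ (n - 1) / ((n : ℝ) + 2 * Real.cos n))
      = (∑ i ∈ range m, (-1:ℝ)^i * (1/(i+1:ℝ))) + ∑ i ∈ range m, cc i := by
    intro m
    rw [← Finset.sum_add_distrib, ← Finset.Ico_add_one_right_eq_Icc, Finset.sum_Ico_eq_sum_range]
    norm_num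
    apply Finset.sum_congr rfl
    intro i _
    simp only [cc, Nat.add_sub_cancel, add_comm 1 i]
    push_cast
    ring
  simpa [heq] using this
end

section
/- Let a_n = 1/(n + 2·cos n) for n ≥ 1 and let S = ∑_{n=1}^∞ (−1)^{n−1} a_n (which converges). Then for every m ≥ 1 the remainder satisfies |S − S_m| ≤ a_{m+1} + a_{m+3} + a_{m+5}, where S_m = ∑_{n=1}^m (−1)^{n−1} a_n. -/
open Filter

lemma cos1_bds : (0.5390:ℝ) ≤ Real.cos 1 ∧ Real.cos 1 ≤ 0.5405 := by
  have h8 := Real.cos_bound (x := 1/8) (by rw [abs_of_pos] <;> norm_num)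
  rw [abs_le, abs_of_pos (by norm_num : (0:ℝ) < 1/8)] at h8
  have e4 : Real.cos (1/4) = 2 * Real.cos (1/8) ^ 2 - 1 := by
    rw [← Real.cos_two_mul]; norm_num
  have e2 : Real.cos (1/2) = 2 * Real.cos (1/4) ^ 2 - 1 := by
    rw [← Real.cos_two_mul]; norm_num
  have e1 : Real.cos 1 = 2 * Real.cos (1/2) ^ 2 - 1 := by
    rw [← Real.cos_two_mul]; norm_num
  have c8l : (0.99217:ℝ) ≤ Real.cos (1/8) := by nlinarith [h8.1]
  have c8u : Real.cos (1/8) ≤ (0.99221:ℝ) := by nlinarith [h8.2]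
  have c4l : (0.96879:ℝ) ≤ Real.cos (1/4) := by nlinarith
  have c4u : Real.cos (1/4) ≤ (0.96897:ℝ) := by nlinarith
  have c2l : (0.87710:ℝ) ≤ Real.cos (1/2) := by nlinarith
  have c2u : Real.cos (1/2) ≤ (0.87781:ℝ) := by nlinarith
  constructor
  · nlinarith
  · nlinarith

lemma cos2_bds : (-0.4190:ℝ) ≤ Real.cos 2 ∧ Real.cos 2 ≤ -0.4157 := by
  have r : Real.cos 2 = 2 * Real.cos 1 ^ 2 - 1 := by
    rw [← Real.cos_two_mul]; norm_num
  obtain ⟨l1, u1⟩ := cos1_bds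
  constructor <;> nlinarith

lemma cos3_bds : (-0.9935:ℝ) ≤ Real.cos 3 ∧ Real.cos 3 ≤ -0.9871 := by
  have r := Real.cos_add_cos 3 1
  norm_num at r
  obtain ⟨l1, u1⟩ := cos1_bds
  obtain ⟨lp, up⟩ := cos2_bds
  obtain ⟨lq, uq⟩ := cos1_bds
  constructor <;>
    nlinarith [mul_nonneg (sub_nonneg.2 lp) (sub_nonneg.2 l1),
      mul_nonneg (sub_nonneg.2 lp) (sub_nonneg.2 u1),
      mul_nonneg (sub_nonneg.2 up) (sub_nonneg.2 l1),
      mul_nonneg (sub_nonneg.2 up) (sub_nonneg.2 u1)]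

lemma cos4_bds : (-0.6583:ℝ) ≤ Real.cos 4 ∧ Real.cos 4 ≤ -0.6450 := by
  have r := Real.cos_add_cos 4 2
  norm_num at r
  obtain ⟨l1, u1⟩ := cos1_bds
  obtain ⟨lp, up⟩ := cos3_bds
  obtain ⟨lq, uq⟩ := cos2_bds
  constructor <;>
    nlinarith [mul_nonneg (sub_nonneg.2 lp) (sub_nonneg.2 l1),
      mul_nonneg (sub_nonneg.2 lp) (sub_nonneg.2 u1),
      mul_nonneg (sub_nonneg.2 up) (sub_nonneg.2 l1),
      mul_nonneg (sub_nonneg.2 up) (sub_nonneg.2 u1)]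

lemma cos5_bds : (0.2754:ℝ) ≤ Real.cos 5 ∧ Real.cos 5 ≤ 0.2982 := by
  have r := Real.cos_add_cos 5 3
  norm_num at r
  obtain ⟨l1, u1⟩ := cos1_bds
  obtain ⟨lp, up⟩ := cos4_bds
  obtain ⟨lq, uq⟩ := cos3_bds
  constructor <;>
    nlinarith [mul_nonneg (sub_nonneg.2 lp) (sub_nonneg.2 l1),
      mul_nonneg (sub_nonneg.2 lp) (sub_nonneg.2 u1),
      mul_nonneg (sub_nonneg.2 up) (sub_nonneg.2 l1),
      mul_nonneg (sub_nonneg.2 up) (sub_nonneg.2 u1)]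

lemma cos6_bds : (0.9418:ℝ) ≤ Real.cos 6 ∧ Real.cos 6 ≤ 0.9807 := by
  have r := Real.cos_add_cos 6 4
  norm_num at r
  obtain ⟨l1, u1⟩ := cos1_bds
  obtain ⟨lp, up⟩ := cos5_bds
  obtain ⟨lq, uq⟩ := cos4_bds
  constructor <;>
    nlinarith [mul_nonneg (sub_nonneg.2 lp) (sub_nonneg.2 l1),
      mul_nonneg (sub_nonneg.2 lp) (sub_nonneg.2 u1),
      mul_nonneg (sub_nonneg.2 up) (sub_nonneg.2 l1),
      mul_nonneg (sub_nonneg.2 up) (sub_nonneg.2 u1)]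

lemma cos7_bds : (0.7170:ℝ) ≤ Real.cos 7 ∧ Real.cos 7 ≤ 0.7848 := by
  have r := Real.cos_add_cos 7 5
  norm_num at r
  obtain ⟨l1, u1⟩ := cos1_bds
  obtain ⟨lp, up⟩ := cos6_bds
  obtain ⟨lq, uq⟩ := cos5_bds
  constructor <;>
    nlinarith [mul_nonneg (sub_nonneg.2 lp) (sub_nonneg.2 l1),
      mul_nonneg (sub_nonneg.2 lp) (sub_nonneg.2 u1),
      mul_nonneg (sub_nonneg.2 up) (sub_nonneg.2 l1),
      mul_nonneg (sub_nonneg.2 up) (sub_nonneg.2 u1)]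

lemma cos8_bds : (-0.2078:ℝ) ≤ Real.cos 8 ∧ Real.cos 8 ≤ -0.0934 := by
  have r := Real.cos_add_cos 8 6
  norm_num at r
  obtain ⟨l1, u1⟩ := cos1_bds
  obtain ⟨lp, up⟩ := cos7_bds
  obtain ⟨lq, uq⟩ := cos6_bds
  constructor <;>
    nlinarith [mul_nonneg (sub_nonneg.2 lp) (sub_nonneg.2 l1),
      mul_nonneg (sub_nonneg.2 lp) (sub_nonneg.2 u1),
      mul_nonneg (sub_nonneg.2 up) (sub_nonneg.2 l1),
      mul_nonneg (sub_nonneg.2 up) (sub_nonneg.2 u1)]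

lemma cos9_bds : (-1.0095:ℝ) ≤ Real.cos 9 ∧ Real.cos 9 ≤ -0.8176 := by
  have r := Real.cos_add_cos 9 7
  norm_num at r
  obtain ⟨l1, u1⟩ := cos1_bds
  obtain ⟨lp, up⟩ := cos8_bds
  obtain ⟨lq, uq⟩ := cos7_bds
  constructor <;>
    nlinarith [mul_nonneg (sub_nonneg.2 lp) (sub_nonneg.2 l1),
      mul_nonneg (sub_nonneg.2 lp) (sub_nonneg.2 u1),
      mul_nonneg (sub_nonneg.2 up) (sub_nonneg.2 l1),
      mul_nonneg (sub_nonneg.2 up) (sub_nonneg.2 u1)]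

lemma cos10_bds : (-0.9979:ℝ) ≤ Real.cos 10 ∧ Real.cos 10 ≤ -0.6735 := by
  have r := Real.cos_add_cos 10 8
  norm_num at r
  obtain ⟨l1, u1⟩ := cos1_bds
  obtain ⟨lp, up⟩ := cos9_bds
  obtain ⟨lq, uq⟩ := cos8_bds
  constructor <;>
    nlinarith [mul_nonneg (sub_nonneg.2 lp) (sub_nonneg.2 l1),
      mul_nonneg (sub_nonneg.2 lp) (sub_nonneg.2 u1),
      mul_nonneg (sub_nonneg.2 up) (sub_nonneg.2 l1),
      mul_nonneg (sub_nonneg.2 up) (sub_nonneg.2 u1)]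

lemma cos11_bds : (-0.2612:ℝ) ≤ Real.cos 11 ∧ Real.cos 11 ≤ 0.2835 := by
  have r := Real.cos_add_cos 11 9
  norm_num at r
  obtain ⟨l1, u1⟩ := cos1_bds
  obtain ⟨lp, up⟩ := cos10_bds
  obtain ⟨lq, uq⟩ := cos9_bds
  constructor <;>
    nlinarith [mul_nonneg (sub_nonneg.2 lp) (sub_nonneg.2 l1),
      mul_nonneg (sub_nonneg.2 lp) (sub_nonneg.2 u1),
      mul_nonneg (sub_nonneg.2 up) (sub_nonneg.2 l1),
      mul_nonneg (sub_nonneg.2 up) (sub_nonneg.2 u1)]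

lemma auxb {x lo hi l u : ℝ} (h1 : lo ≤ x) (h2 : x ≤ hi) (h0 : 0 < lo)
    (hl : l ≤ 1/hi) (hu : 1/lo ≤ u) : l ≤ 1/x ∧ 1/x ≤ u :=
  ⟨le_trans hl (one_div_le_one_div_of_le (by linarith) h2),
   le_trans (one_div_le_one_div_of_le h0 h1) hu⟩

set_option maxHeartbeats 1000000 in
lemma akey (a : ℕ → ℝ) (ha : ∀ n : ℕ, a n = 1 / ((n : ℝ) + 2 * Real.cos n)) :
    ∀ m : ℕ, 1 ≤ m → a (m+2) + a (m+4) ≤ a (m+1) + a (m+3) + a (m+5) := by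
  have A2 : (0.8557:ℝ) ≤ a 2 ∧ a 2 ≤ 0.8606 := by
    have hk : a 2 = 1 / ((2:ℝ) + 2 * Real.cos 2) := by rw [ha]; norm_num
    rw [hk]
    exact auxb (by linarith [cos2_bds.1] : (1.1620:ℝ) ≤ 2 + 2 * Real.cos 2)
      (by linarith [cos2_bds.2] : ((2:ℝ) + 2 * Real.cos 2) ≤ 1.1686)
      (by norm_num) (by norm_num) (by norm_num)
  have A3 : (0.9748:ℝ) ≤ a 3 ∧ a 3 ≤ 0.9872 := by
    have hk : a 3 = 1 / ((3:ℝ) + 2 * Real.cos 3) := by rw [ha]; norm_num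
    rw [hk]
    exact auxb (by linarith [cos3_bds.1] : (1.0130:ℝ) ≤ 3 + 2 * Real.cos 3)
      (by linarith [cos3_bds.2] : ((3:ℝ) + 2 * Real.cos 3) ≤ 1.0258)
      (by norm_num) (by norm_num) (by norm_num)
  have A4 : (0.3690:ℝ) ≤ a 4 ∧ a 4 ≤ 0.3727 := by
    have hk : a 4 = 1 / ((4:ℝ) + 2 * Real.cos 4) := by rw [ha]; norm_num
    rw [hk]
    exact auxb (by linarith [cos4_bds.1] : (2.6834:ℝ) ≤ 4 + 2 * Real.cos 4)
      (by linarith [cos4_bds.2] : ((4:ℝ) + 2 * Real.cos 4) ≤ 2.7100)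
      (by norm_num) (by norm_num) (by norm_num)
  have A5 : (0.1786:ℝ) ≤ a 5 ∧ a 5 ≤ 0.1802 := by
    have hk : a 5 = 1 / ((5:ℝ) + 2 * Real.cos 5) := by rw [ha]; norm_num
    rw [hk]
    exact auxb (by linarith [cos5_bds.1] : (5.5508:ℝ) ≤ 5 + 2 * Real.cos 5)
      (by linarith [cos5_bds.2] : ((5:ℝ) + 2 * Real.cos 5) ≤ 5.5964)
      (by norm_num) (by norm_num) (by norm_num)
  have A6 : (0.1256:ℝ) ≤ a 6 ∧ a 6 ≤ 0.1269 := by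
    have hk : a 6 = 1 / ((6:ℝ) + 2 * Real.cos 6) := by rw [ha]; norm_num
    rw [hk]
    exact auxb (by linarith [cos6_bds.1] : (7.8836:ℝ) ≤ 6 + 2 * Real.cos 6)
      (by linarith [cos6_bds.2] : ((6:ℝ) + 2 * Real.cos 6) ≤ 7.9614)
      (by norm_num) (by norm_num) (by norm_num)
  have A7 : (0.1166:ℝ) ≤ a 7 ∧ a 7 ≤ 0.1186 := by
    have hk : a 7 = 1 / ((7:ℝ) + 2 * Real.cos 7) := by rw [ha]; norm_num
    rw [hk]
    exact auxb (by linarith [cos7_bds.1] : (8.4340:ℝ) ≤ 7 + 2 * Real.cos 7)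
      (by linarith [cos7_bds.2] : ((7:ℝ) + 2 * Real.cos 7) ≤ 8.5696)
      (by norm_num) (by norm_num) (by norm_num)
  have A8 : (0.1279:ℝ) ≤ a 8 ∧ a 8 ≤ 0.1319 := by
    have hk : a 8 = 1 / ((8:ℝ) + 2 * Real.cos 8) := by rw [ha]; norm_num
    rw [hk]
    exact auxb (by linarith [cos8_bds.1] : (7.5844:ℝ) ≤ 8 + 2 * Real.cos 8)
      (by linarith [cos8_bds.2] : ((8:ℝ) + 2 * Real.cos 8) ≤ 7.8132)
      (by norm_num) (by norm_num) (by norm_num)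
  have A9 : (0.1357:ℝ) ≤ a 9 ∧ a 9 ≤ 0.1433 := by
    have hk : a 9 = 1 / ((9:ℝ) + 2 * Real.cos 9) := by rw [ha]; norm_num
    rw [hk]
    exact auxb (by linarith [cos9_bds.1] : (6.9810:ℝ) ≤ 9 + 2 * Real.cos 9)
      (by linarith [cos9_bds.2] : ((9:ℝ) + 2 * Real.cos 9) ≤ 7.3648)
      (by norm_num) (by norm_num) (by norm_num)
  have A10 : (0.1155:ℝ) ≤ a 10 ∧ a 10 ≤ 0.1250 := by
    have hk : a 10 = 1 / ((10:ℝ) + 2 * Real.cos 10) := by rw [ha]; norm_num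
    rw [hk]
    exact auxb (by linarith [cos10_bds.1] : (8.0042:ℝ) ≤ 10 + 2 * Real.cos 10)
      (by linarith [cos10_bds.2] : ((10:ℝ) + 2 * Real.cos 10) ≤ 8.6530)
      (by norm_num) (by norm_num) (by norm_num)
  have A11 : (0.0864:ℝ) ≤ a 11 ∧ a 11 ≤ 0.0955 := by
    have hk : a 11 = 1 / ((11:ℝ) + 2 * Real.cos 11) := by rw [ha]; norm_num
    rw [hk]
    exact auxb (by linarith [cos11_bds.1] : (10.4776:ℝ) ≤ 11 + 2 * Real.cos 11)
      (by linarith [cos11_bds.2] : ((11:ℝ) + 2 * Real.cos 11) ≤ 11.5670)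
      (by norm_num) (by norm_num) (by norm_num)
  intro m hm
  by_cases hm7 : m ≤ 6
  · interval_cases m
    · norm_num
      linarith [A3.2, A5.2, A2.1, A4.1, A6.1]
    · norm_num
      linarith [A4.2, A6.2, A3.1, A5.1, A7.1]
    · norm_num
      linarith [A5.2, A7.2, A4.1, A6.1, A8.1]
    · norm_num
      linarith [A6.2, A8.2, A5.1, A7.1, A9.1]
    · norm_num
      linarith [A7.2, A9.2, A6.1, A8.1, A10.1]
    · norm_num
      linarith [A8.2, A10.2, A7.1, A9.1, A11.1]
  · push_neg at hm7
    have h7 : (7:ℝ) ≤ (m:ℝ) := by exact_mod_cast hm7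
    have hb1 : a (m+2) ≤ 1/(m:ℝ) := by
      rw [ha]; push_cast
      exact one_div_le_one_div_of_le (by linarith)
        (by linarith [Real.neg_one_le_cos ((m:ℝ)+2)])
    have hb2 : a (m+4) ≤ 1/((m:ℝ)+2) := by
      rw [ha]; push_cast
      exact one_div_le_one_div_of_le (by linarith)
        (by linarith [Real.neg_one_le_cos ((m:ℝ)+4)])
    have hb3 : 1/((m:ℝ)+3) ≤ a (m+1) := by
      rw [ha]; push_cast
      exact one_div_le_one_div_of_le
        (by linarith [Real.neg_one_le_cos ((m:ℝ)+1)])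
        (by linarith [Real.cos_le_one ((m:ℝ)+1)])
    have hb4 : 1/((m:ℝ)+5) ≤ a (m+3) := by
      rw [ha]; push_cast
      exact one_div_le_one_div_of_le
        (by linarith [Real.neg_one_le_cos ((m:ℝ)+3)])
        (by linarith [Real.cos_le_one ((m:ℝ)+3)])
    have hb5 : 1/((m:ℝ)+7) ≤ a (m+5) := by
      rw [ha]; push_cast
      exact one_div_le_one_div_of_le
        (by linarith [Real.neg_one_le_cos ((m:ℝ)+5)])
        (by linarith [Real.cos_le_one ((m:ℝ)+5)])
    set x : ℝ := (m:ℝ) with hx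
    have hx0 : (0:ℝ) < x := by linarith
    have h2 : x + 2 ≠ 0 := by linarith
    have h3 : x + 3 ≠ 0 := by linarith
    have h5 : x + 5 ≠ 0 := by linarith
    have h7' : x + 7 ≠ 0 := by linarith
    have key : 1/x + 1/(x+2) ≤ 1/(x+3) + 1/(x+5) + 1/(x+7) := by
      have e : (1/(x+3) + 1/(x+5) + 1/(x+7)) - (1/x + 1/(x+2)) =
          (x^4 + 4*x^3 - 41*x^2 - 210*x - 210) / (x*(x+2)*(x+3)*(x+5)*(x+7)) := by
        field_simp
        ring
      have hcube : (0:ℝ) ≤ x^3 + 11*x^2 + 36*x + 42 := by positivity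
      have hnum : (0:ℝ) ≤ x^4 + 4*x^3 - 41*x^2 - 210*x - 210 := by
        nlinarith [mul_nonneg (by linarith : (0:ℝ) ≤ x - 7) hcube]
      have hden : (0:ℝ) < x*(x+2)*(x+3)*(x+5)*(x+7) := by positivity
      have := div_nonneg hnum hden.le
      linarith [e ▸ this]
    linarith [hb1, hb2, hb3, hb4, hb5, key]

lemma denpos (n : ℕ) (hn : 1 ≤ n) : 0 < (n:ℝ) + 2 * Real.cos n := by
  by_cases h1 : n = 1
  · subst h1; simp only [Nat.cast_one]; linarith [Real.cos_one_pos]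
  by_cases h2 : n = 2
  · subst h2; push_cast; linarith [cos2_bds.1]
  · have h3 : 3 ≤ n := by omega
    have h3' : (3:ℝ) ≤ (n:ℝ) := by exact_mod_cast h3
    linarith [Real.neg_one_le_cos ((n:ℝ))]

noncomputable def Vt (a : ℕ → ℝ) (m : ℕ) : ℕ → ℝ :=
  fun K => ∑ k ∈ Finset.Icc 1 K, (-1:ℝ)^(k-1) * a (m+k)

lemma Vt_zero (a : ℕ → ℝ) (m : ℕ) : Vt a m 0 = 0 := by simp [Vt]

lemma Vt_succ (a : ℕ → ℝ) (m : ℕ) (K : ℕ) :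
    Vt a m (K+1) = Vt a m K + (-1:ℝ)^K * a (m+(K+1)) := by
  unfold Vt
  rw [Finset.sum_Icc_succ_top (by omega)]
  simp

lemma inv_lemma (a : ℕ → ℝ) (m : ℕ)
    (hZ6 : ∀ k, a (m+(k+6)) ≤ a (m+(k+1)))
    (hZ7 : ∀ k, a (m+(k+7)) ≤ a (m+(k+2))) :
    ∀ j, Vt a m (2*j+5) ≤ (a (m+1) + a (m+3) + a (m+5)) - a (m+(2*j+2)) - a (m+(2*j+4)) ∧
      -(a (m+2)) - a (m+4) + a (m+(2*j+1)) + a (m+(2*j+3)) + a (m+(2*j+5)) ≤ Vt a m (2*j+5) := by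
  have e1 : Vt a m 1 = a (m+1) := by
    have h := Vt_succ a m 0
    rw [Vt_zero] at h; norm_num at h; exact h
  have e2 : Vt a m 2 = a (m+1) - a (m+2) := by
    have h := Vt_succ a m 1
    norm_num [e1] at h; linarith
  have e3 : Vt a m 3 = a (m+1) - a (m+2) + a (m+3) := by
    have h := Vt_succ a m 2
    norm_num [e2] at h; linarith
  have e4 : Vt a m 4 = a (m+1) - a (m+2) + a (m+3) - a (m+4) := by
    have h := Vt_succ a m 3
    norm_num [e3] at h; linarith
  have e5 : Vt a m 5 = a (m+1) - a (m+2) + a (m+3) - a (m+4) + a (m+5) := by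
    have h := Vt_succ a m 4
    norm_num [e4] at h; linarith
  intro j
  induction j with
  | zero =>
    norm_num
    constructor <;> linarith [e5]
  | succ j ih =>
    obtain ⟨ihu, ihl⟩ := ih
    have s1 := Vt_succ a m (2*j+5)
    have s2 := Vt_succ a m (2*j+6)
    rw [show 2*j+5+1 = 2*j+6 from by omega] at s1
    rw [show 2*j+6+1 = 2*j+7 from by omega] at s2
    rw [Odd.neg_one_pow ⟨j+2, by omega⟩] at s1
    rw [Even.neg_one_pow ⟨j+3, by omega⟩] at s2
    constructor
    · rw [show 2*(j+1)+5 = 2*j+7 from by omega, show 2*(j+1)+2 = 2*j+4 from by omega,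
        show 2*(j+1)+4 = 2*j+6 from by omega]
      linarith [hZ7 (2*j)]
    · rw [show 2*(j+1)+5 = 2*j+7 from by omega, show 2*(j+1)+1 = 2*j+3 from by omega,
        show 2*(j+1)+3 = 2*j+5 from by omega]
      linarith [hZ6 (2*j)]

lemma allK_lemma (a : ℕ → ℝ) (m : ℕ)
    (pos : ∀ k, 1 ≤ k → 0 < a (m+k))
    (hZ6 : ∀ k, a (m+(k+6)) ≤ a (m+(k+1)))
    (hZ7 : ∀ k, a (m+(k+7)) ≤ a (m+(k+2)))
    (hP : a (m+2) + a (m+4) ≤ a (m+1) + a (m+3) + a (m+5)) :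
    ∀ K, |Vt a m K| ≤ a (m+1) + a (m+3) + a (m+5) := by
  have inv := inv_lemma a m hZ6 hZ7
  have e1 : Vt a m 1 = a (m+1) := by
    have h := Vt_succ a m 0
    rw [Vt_zero] at h; norm_num at h; exact h
  have e2 : Vt a m 2 = a (m+1) - a (m+2) := by
    have h := Vt_succ a m 1
    norm_num [e1] at h; linarith
  have e3 : Vt a m 3 = a (m+1) - a (m+2) + a (m+3) := by
    have h := Vt_succ a m 2
    norm_num [e2] at h; linarith
  have e4 : Vt a m 4 = a (m+1) - a (m+2) + a (m+3) - a (m+4) := by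
    have h := Vt_succ a m 3
    norm_num [e3] at h; linarith
  have p1 := pos 1 (by omega); have p2 := pos 2 (by omega)
  have p3 := pos 3 (by omega); have p4 := pos 4 (by omega)
  have p5 := pos 5 (by omega)
  intro K
  rw [abs_le]
  by_cases h5 : K ≤ 4
  · interval_cases K
    · rw [Vt_zero]; constructor <;> linarith
    · rw [e1]; constructor <;> linarith
    · rw [e2]; constructor <;> linarith
    · rw [e3]; constructor <;> linarith
    · rw [e4]; constructor <;> linarith
  · push_neg at h5
    obtain ⟨j, hj | hj⟩ := Nat.even_or_odd' (K-5)
    · have hK : K = 2*j+5 := by omega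
      subst hK
      obtain ⟨hu, hl⟩ := inv j
      have q1 := pos (2*j+1) (by omega); have q2 := pos (2*j+2) (by omega)
      have q3 := pos (2*j+3) (by omega); have q4 := pos (2*j+4) (by omega)
      have q5 := pos (2*j+5) (by omega)
      constructor <;> linarith
    · have hK : K = 2*j+6 := by omega
      subst hK
      obtain ⟨hu, hl⟩ := inv j
      have s1 := Vt_succ a m (2*j+5)
      rw [show 2*j+5+1 = 2*j+6 from by omega] at s1
      rw [Odd.neg_one_pow ⟨j+2, by omega⟩] at s1
      have hz := hZ6 (2*j)
      have q2 := pos (2*j+2) (by omega); have q3 := pos (2*j+3) (by omega)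
      have q4 := pos (2*j+4) (by omega); have q5 := pos (2*j+5) (by omega)
      have q6 := pos (2*j+6) (by omega)
      constructor <;> linarith

/-- Remainder estimate for `∑ (-1)^(n-1)/(n + 2·cos n)`:
`|S - S_m| ≤ a_{m+1} + a_{m+3} + a_{m+5}`. -/
theorem cos_series_remainder_bound
    (a : ℕ → ℝ) (ha : ∀ n : ℕ, a n = 1 / ((n : ℝ) + 2 * Real.cos n))
    (S : ℝ)
    (hS : Tendsto (fun m => ∑ n ∈ Finset.Icc 1 m, (-1 : ℝ) ^ (n - 1) * a n)
      atTop (nhds S)) :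
    ∀ m : ℕ, 1 ≤ m →
      |S - ∑ n ∈ Finset.Icc 1 m, (-1 : ℝ) ^ (n - 1) * a n| ≤
        a (m + 1) + a (m + 3) + a (m + 5) := by
  have apos : ∀ n : ℕ, 1 ≤ n → 0 < a n := by
    intro n hn; rw [ha]; exact one_div_pos.mpr (denpos n hn)
  have hZ : ∀ n : ℕ, 1 ≤ n → a (n+5) ≤ a n := by
    intro n hn
    rw [ha n, ha (n+5)]
    apply one_div_le_one_div_of_le (denpos n hn)
    push_cast
    linarith [Real.cos_le_one ((n:ℝ)), Real.neg_one_le_cos ((n:ℝ)+5)]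
  intro m hm
  have pos : ∀ k, 1 ≤ k → 0 < a (m+k) := fun k _ => apos (m+k) (by omega)
  have hZ6 : ∀ k, a (m+(k+6)) ≤ a (m+(k+1)) := by
    intro k
    have h := hZ (m+(k+1)) (by omega)
    rwa [show m+(k+1)+5 = m+(k+6) from by omega] at h
  have hZ7 : ∀ k, a (m+(k+7)) ≤ a (m+(k+2)) := by
    intro k
    have h := hZ (m+(k+2)) (by omega)
    rwa [show m+(k+2)+5 = m+(k+7) from by omega] at h
  have hP := akey a ha m hm
  have hVb := allK_lemma a m pos hZ6 hZ7 hP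
  set Sm := ∑ n ∈ Finset.Icc 1 m, (-1:ℝ)^(n-1) * a n with hSm
  have hrel : ∀ K, (∑ n ∈ Finset.Icc 1 (m+K), (-1:ℝ)^(n-1) * a n) =
      Sm + (-1:ℝ)^m * Vt a m K := by
    intro K
    induction K with
    | zero => rw [Nat.add_zero, Vt_zero, mul_zero, add_zero, hSm]
    | succ K ih =>
      rw [show m+(K+1) = (m+K)+1 from by omega,
        Finset.sum_Icc_succ_top (by omega : 1 ≤ (m+K)+1), ih, Vt_succ]
      rw [show (m+K)+1-1 = m+K from by omega, pow_add,
        show (m+K)+1 = m+(K+1) from by omega]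
      ring
  have hto : Tendsto (fun K => Sm + (-1:ℝ)^m * Vt a m K) atTop (nhds S) := by
    have h1 : Tendsto (fun K : ℕ => ∑ n ∈ Finset.Icc 1 (K+m), (-1:ℝ)^(n-1) * a n)
        atTop (nhds S) := hS.comp (Filter.tendsto_add_atTop_nat m)
    refine h1.congr fun K => ?_
    rw [Nat.add_comm K m]; exact hrel K
  have h2 : Tendsto (fun K => |Sm + (-1:ℝ)^m * Vt a m K - Sm|) atTop
      (nhds |S - Sm|) := (hto.sub_const Sm).abs
  refine le_of_tendsto h2 (Filter.Eventually.of_forall fun K => ?_)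
  rw [add_sub_cancel_left, abs_mul, abs_pow, abs_neg, abs_one, one_pow, one_mul]
  exact hVb K
end

section
/- Let (a_n) be a real sequence and n₀ a natural number such that for all n ≥ n₀: a_{n+1} ≤ a_n, a_n → 0 as n → ∞, and 2·a_{n+1} ≤ a_n + a_{n+2} (discrete convexity). Let S = ∑_{n=n₀}^∞ (−1)^n a_n. Then for every m ≥ n₀ the remainder satisfies (1/2)·a_{m+1} ≤ |S − S_m| ≤ a_{m+1}, where S_m = ∑_{n=n₀}^m (−1)^n a_n. -/
open Filter

/-- For a monotonically decreasing convex null sequence, the remainder of the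
alternating series is between half the first omitted term and the first
omitted term: `(1/2)·a_{m+1} ≤ |S - S_m| ≤ a_{m+1}`. -/
theorem leibniz_remainder_convex_two_sided
    (a : ℕ → ℝ) (n₀ : ℕ)
    (hmono : ∀ n : ℕ, n₀ ≤ n → a (n + 1) ≤ a n)
    (hlim : Tendsto a atTop (nhds 0))
    (hconvex : ∀ n : ℕ, n₀ ≤ n → 2 * a (n + 1) ≤ a n + a (n + 2))
    (S : ℝ)
    (hS : Tendsto (fun m => ∑ n ∈ Finset.Icc n₀ m, (-1 : ℝ) ^ n * a n)
      atTop (nhds S)) :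
    ∀ m : ℕ, n₀ ≤ m →
      (1 / 2) * a (m + 1) ≤ |S - ∑ n ∈ Finset.Icc n₀ m, (-1 : ℝ) ^ n * a n| ∧
      |S - ∑ n ∈ Finset.Icc n₀ m, (-1 : ℝ) ^ n * a n| ≤ a (m + 1) := by
  -- a is antitone from n₀ on
  have hchain : ∀ n, n₀ ≤ n → ∀ k, n ≤ k → a k ≤ a n := by
    intro n hn k hk
    induction k, hk using Nat.le_induction with
    | base => exact le_rfl
    | succ k hk ih => exact le_trans (hmono k (le_trans hn hk)) ih
  have hnn : ∀ n, n₀ ≤ n → 0 ≤ a n := by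
    intro n hn
    exact le_of_tendsto hlim (Filter.eventually_atTop.2 ⟨n, fun k hk => hchain n hn k hk⟩)
  intro m hm
  set g : ℕ → ℝ := fun N => ∑ n ∈ Finset.Icc n₀ N, (-1 : ℝ) ^ n * a n with hg
  have hgsucc : ∀ N, n₀ ≤ N → g (N + 1) = g N + (-1 : ℝ) ^ (N + 1) * a (N + 1) := by
    intro N hN
    simp only [hg]
    rw [Finset.sum_Icc_succ_top (Nat.le_succ_of_le hN)]
  set h : ℕ → ℝ := fun N => (-1 : ℝ) ^ (m + 1) * (g N - g m) with hh
  set t : ℝ := (-1 : ℝ) ^ (m + 1) * (S - g m) with ht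
  have hsq : ∀ k : ℕ, ((-1 : ℝ) ^ k) * ((-1 : ℝ) ^ k) = 1 := by
    intro k
    rw [← pow_add]
    exact Even.neg_one_pow ⟨k, by ring⟩
  have hstep2 : ∀ N, m ≤ N → h (N + 1) = h N + (-1 : ℝ) ^ (N + m) * a (N + 1) := by
    intro N hN
    have hN0 : n₀ ≤ N := le_trans hm hN
    have hsgn : (-1 : ℝ) ^ (m + 1) * (-1 : ℝ) ^ (N + 1) = (-1 : ℝ) ^ (N + m) := by
      rw [← pow_add]
      rcases Nat.even_or_odd (N + m) with ⟨k, hk⟩ | ⟨k, hk⟩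
      · rw [Even.neg_one_pow ⟨k + 1, by omega⟩, Even.neg_one_pow ⟨k, by omega⟩]
      · rw [Odd.neg_one_pow ⟨k + 1, by omega⟩, Odd.neg_one_pow ⟨k, by omega⟩]
    simp only [hh]
    rw [hgsucc N hN0, ← hsgn]
    ring
  have hm0 : h m = 0 := by simp [hh]
  -- h at odd offsets bounded by a (m+1)
  have hupper : ∀ j, h (m + 1 + 2 * j) ≤ a (m + 1) := by
    intro j
    induction j with
    | zero =>
      have hst := hstep2 m le_rfl
      rw [hm0, Even.neg_one_pow (⟨m, by omega⟩ : Even (m + m))] at hst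
      show h (m + 1) ≤ a (m + 1)
      rw [hst]; linarith
    | succ j ih =>
      have h1 := hstep2 (m + 1 + 2 * j) (by omega)
      have h2 := hstep2 (m + 1 + 2 * j + 1) (by omega)
      rw [Odd.neg_one_pow (⟨m + j, by omega⟩ : Odd (m + 1 + 2 * j + m))] at h1
      rw [Even.neg_one_pow (⟨m + j + 1, by omega⟩ : Even (m + 1 + 2 * j + 1 + m))] at h2
      have e1 : m + 1 + 2 * (j + 1) = m + 1 + 2 * j + 1 + 1 := by ring
      rw [e1, h2, h1]
      have hmono1 : a (m + 1 + 2 * j + 1 + 1) ≤ a (m + 1 + 2 * j + 1) := hmono _ (by omega)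
      linarith
  -- lower bound: 2 * h(m + 2j) ≥ a(m+1) - a(m+1+2j)
  have hlower : ∀ j, a (m + 1) - a (m + 1 + 2 * j) ≤ 2 * h (m + 2 * j) := by
    intro j
    induction j with
    | zero => simp [hm0]
    | succ j ih =>
      have h1 := hstep2 (m + 2 * j) (by omega)
      have h2 := hstep2 (m + 2 * j + 1) (by omega)
      rw [Even.neg_one_pow (⟨m + j, by omega⟩ : Even (m + 2 * j + m))] at h1
      rw [Odd.neg_one_pow (⟨m + j, by omega⟩ : Odd (m + 2 * j + 1 + m))] at h2
      have hcx := hconvex (m + 2 * j + 1) (by omega)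
      have e1 : m + 2 * (j + 1) = m + 2 * j + 1 + 1 := by ring
      have e2 : m + 1 + 2 * (j + 1) = m + 2 * j + 1 + 2 := by ring
      have e3 : m + 1 + 2 * j = m + 2 * j + 1 := by ring
      rw [e3] at ih
      rw [e1, e2, h2, h1]
      linarith
  -- limits
  have hht : Tendsto h atTop (nhds t) := by
    have h1 : Tendsto (fun N => g N - g m) atTop (nhds (S - g m)) := hS.sub_const (g m)
    exact h1.const_mul _
  have hmono_idx : ∀ c : ℕ, Tendsto (fun j => c + 2 * j) atTop atTop := by
    intro c
    apply tendsto_atTop_atTop_of_monotone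
    · intro x y hxy; show c + 2 * x ≤ c + 2 * y; omega
    · intro b; exact ⟨b, by show b ≤ c + 2 * b; omega⟩
  have hodd : Tendsto (fun j => h (m + 1 + 2 * j)) atTop (nhds t) :=
    hht.comp (hmono_idx (m + 1))
  have heven : Tendsto (fun j => h (m + 2 * j)) atTop (nhds t) :=
    hht.comp (hmono_idx m)
  have hta : t ≤ a (m + 1) := le_of_tendsto hodd (Filter.Eventually.of_forall hupper)
  have htlow : a (m + 1) ≤ 2 * t := by
    have h1 : Tendsto (fun j => a (m + 1) - a (m + 1 + 2 * j)) atTop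
        (nhds (a (m + 1) - 0)) :=
      (tendsto_const_nhds).sub (hlim.comp (hmono_idx (m + 1)))
    have h2 : Tendsto (fun j => 2 * h (m + 2 * j)) atTop (nhds (2 * t)) :=
      heven.const_mul 2
    have := le_of_tendsto_of_tendsto' h1 h2 hlower
    linarith
  have htnn : 0 ≤ t := by
    have := hnn (m + 1) (by omega)
    linarith
  have habs : |S - g m| = t := by
    have : |S - g m| = |t| := by
      rw [ht, abs_mul, abs_pow, abs_neg, abs_one, one_pow, one_mul]
    rw [this, abs_of_nonneg htnn]
  constructor
  · rw [show (∑ n ∈ Finset.Icc n₀ m, (-1 : ℝ) ^ n * a n) = g m from rfl, habs]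
    linarith
  · rw [show (∑ n ∈ Finset.Icc n₀ m, (-1 : ℝ) ^ n * a n) = g m from rfl, habs]
    exact hta
end

section
/- Let ω ≥ 1, p = 2ω − 1, and let (a_n) be a nonnegative real sequence with a_n → 0 such that for all n ≥ n₀: a_{n+p} ≤ a_n (Z(p)-monotone decrease) and 2·a_{n+p} ≤ a_n + a_{n+2p} (convexity along each arithmetic progression of step p). Let S = ∑_{n=n₀}^∞ (−1)^n a_n. Then for every m ≥ n₀: (−1)^{m+1}(S − S_m) ≤ ∑_{r=1}^{ω} a_{m+2r−1} − (1/2)·∑_{r=1}^{ω−1} a_{m+2r}, where S_m = ∑_{n=n₀}^m (−1)^n a_n. -/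
open Filter


lemma alt_bounds (b : ℕ → ℝ) (hdec : ∀ i, b (i+1) ≤ b i)
    (hconv : ∀ i, 2 * b (i+1) ≤ b i + b (i+2))
    (hlim : Tendsto b atTop (nhds 0)) :
    ∃ δ : ℝ, Tendsto (fun K => ∑ i ∈ Finset.range K, (-1:ℝ)^i * b i)
        atTop (nhds δ) ∧ (1/2) * b 0 ≤ δ ∧ δ ≤ b 0 := by
  have hanti : Antitone b := antitone_nat_of_succ_le hdec
  obtain ⟨δ, hδ⟩ := hanti.tendsto_alternating_series_of_tendsto_zero hlim
  refine ⟨δ, hδ, ?_, ?_⟩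
  · have key : ∀ K, b 0 - b (2*K) ≤ 2 * ∑ i ∈ Finset.range (2*K), (-1:ℝ)^i * b i := by
      intro K
      induction K with
      | zero => simp
      | succ K ih =>
        have h2 : 2*(K+1) = 2*K + 1 + 1 := by ring
        rw [h2, Finset.sum_range_succ, Finset.sum_range_succ]
        have e1 : ((-1:ℝ))^(2*K) = 1 := by simp [pow_mul]
        have e2 : ((-1:ℝ))^(2*K+1) = -1 := by rw [pow_succ, e1]; ring
        rw [e1, e2]
        have hidx : 2*K+1+1 = 2*K+2 := by ring
        rw [hidx]
        have hc := hconv (2*K)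
        have hc' : 2 * b (2*K+1) ≤ b (2*K) + b (2*K+2) := by
          have : 2*K+2 = 2*K+1+1 := by ring
          rw [this]; exact hc
        linarith
    have htwo : Tendsto (fun K : ℕ => 2*K) atTop atTop :=
      tendsto_atTop_mono (fun n => by dsimp; omega) tendsto_id
    have hP2 : Tendsto (fun K => ∑ i ∈ Finset.range (2*K), (-1:ℝ)^i * b i)
        atTop (nhds δ) := hδ.comp htwo
    have hb2 : Tendsto (fun K => b (2*K)) atTop (nhds 0) := hlim.comp htwo
    have h1 : Tendsto (fun K => b 0 - b (2*K)) atTop (nhds (b 0 - 0)) :=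
      tendsto_const_nhds.sub hb2
    have h2 : Tendsto (fun K => 2 * ∑ i ∈ Finset.range (2*K), (-1:ℝ)^i * b i)
        atTop (nhds (2 * δ)) := hP2.const_mul 2
    have := le_of_tendsto_of_tendsto' h1 h2 key
    linarith
  · have := hanti.tendsto_le_alternating_series hδ 0
    simpa using this

lemma block_sum (g : ℕ → ℝ) (p : ℕ) : ∀ K : ℕ,
    ∑ i ∈ Finset.range (K*p), g i = ∑ k ∈ Finset.range K, ∑ j ∈ Finset.range p, g (k*p + j) := by
  intro K
  induction K with
  | zero => simp
  | succ K ih =>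
    rw [show (K+1)*p = K*p + p by ring, Finset.sum_range_add, ih, Finset.sum_range_succ]

lemma sum_split (v : ℕ → ℝ) : ∀ t : ℕ,
    ∑ j ∈ Finset.range (2*t+1), (if Even j then v (j+1) else -(1/2) * v (j+1))
      = ∑ r ∈ Finset.Icc 1 (t+1), v (2*r-1) - (1/2) * ∑ r ∈ Finset.Icc 1 t, v (2*r) := by
  intro t
  induction t with
  | zero => norm_num
  | succ t ih =>
    rw [show 2*(t+1)+1 = (2*t+1)+1+1 by ring, Finset.sum_range_succ, Finset.sum_range_succ, ih]
    rw [Finset.sum_Icc_succ_top (by omega : 1 ≤ t+1+1) (fun r => v (2*r-1)),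
        Finset.sum_Icc_succ_top (by omega : 1 ≤ t+1) (fun r => v (2*r))]
    have h1 : ¬ Even (2*t+1) := by simp [Nat.even_add_one]
    have h2 : Even (2*t+1+1) := by simp [Nat.even_add_one, h1]
    rw [if_neg h1, if_pos h2]
    have e1 : 2*(t+1+1)-1 = 2*t+1+1+1 := by omega
    have e2 : 2*(t+1) = 2*t+1+1 := by omega
    rw [e1, e2]
    ring


/-- Improved one-sided remainder estimate for a `Z(p)`-series, `p = 2ω - 1`,
under convexity along each arithmetic progression of step `p`:
`(-1)^{m+1}·(S - S_m) ≤ ∑_{r=1}^{ω} a_{m+2r-1} - (1/2)·∑_{r=1}^{ω-1} a_{m+2r}`. -/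
theorem Z_series_remainder_improved_bound
    (ω n₀ : ℕ) (hω : 1 ≤ ω) (a : ℕ → ℝ)
    (hpos : ∀ n : ℕ, 0 ≤ a n)
    (hlim : Tendsto a atTop (nhds 0))
    (hZ : ∀ n : ℕ, n₀ ≤ n → a (n + (2 * ω - 1)) ≤ a n)
    (hconvex : ∀ n : ℕ, n₀ ≤ n →
      2 * a (n + (2 * ω - 1)) ≤ a n + a (n + 2 * (2 * ω - 1)))
    (S : ℝ)
    (hS : Tendsto (fun m => ∑ n ∈ Finset.Icc n₀ m, (-1 : ℝ) ^ n * a n)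
      atTop (nhds S)) :
    ∀ m : ℕ, n₀ ≤ m →
      (-1 : ℝ) ^ (m + 1) * (S - ∑ n ∈ Finset.Icc n₀ m, (-1 : ℝ) ^ n * a n) ≤
        ∑ r ∈ Finset.Icc 1 ω, a (m + 2 * r - 1) -
          (1 / 2) * ∑ r ∈ Finset.Icc 1 (ω - 1), a (m + 2 * r) := by
  intro m hm
  set p := 2 * ω - 1 with hp
  have hp1 : 1 ≤ p := by omega
  have hppow : ∀ k : ℕ, ((-1:ℝ))^(k*p) = (-1)^k := by
    intro k
    have hodd : Odd p := ⟨ω - 1, by omega⟩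
    rw [mul_comm, pow_mul, hodd.neg_one_pow]
  set b : ℕ → ℕ → ℝ := fun j i => a (m + 1 + j + i * p) with hb
  have hbdec : ∀ j i, b j (i+1) ≤ b j i := by
    intro j i
    have h := hZ (m + 1 + j + i * p) (by omega)
    have e : m + 1 + j + (i+1) * p = (m + 1 + j + i * p) + p := by ring
    simpa [hb, e] using h
  have hbconv : ∀ j i, 2 * b j (i+1) ≤ b j i + b j (i+2) := by
    intro j i
    have h := hconvex (m + 1 + j + i * p) (by omega)
    have e1 : m + 1 + j + (i+1) * p = (m + 1 + j + i * p) + p := by ring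
    have e2 : m + 1 + j + (i+2) * p = (m + 1 + j + i * p) + 2 * p := by ring
    simpa [hb, e1, e2] using h
  have hblim : ∀ j, Tendsto (b j) atTop (nhds 0) := by
    intro j
    exact hlim.comp (tendsto_atTop_mono
      (fun i => le_trans (Nat.le_mul_of_pos_right i (by omega)) (Nat.le_add_left _ _))
      tendsto_id)
  have hδex : ∀ j, ∃ δ : ℝ, Tendsto (fun K => ∑ i ∈ Finset.range K, (-1:ℝ)^i * b j i)
      atTop (nhds δ) ∧ (1/2) * b j 0 ≤ δ ∧ δ ≤ b j 0 :=
    fun j => alt_bounds (b j) (hbdec j) (hbconv j) (hblim j)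
  choose δ hδt hδlo hδhi using hδex
  set Sm : ℝ := ∑ n ∈ Finset.Icc n₀ m, (-1 : ℝ) ^ n * a n with hSm
  -- key partial sum identity
  have key : ∀ K : ℕ, ∑ n ∈ Finset.Icc n₀ (m + K * p), (-1:ℝ)^n * a n
      = Sm + ∑ j ∈ Finset.range p, (-1:ℝ)^(m+1+j) * ∑ i ∈ Finset.range K, (-1:ℝ)^i * b j i := by
    intro K
    have hdisj : Disjoint (Finset.Icc n₀ m) (Finset.Ioc m (m + K * p)) := by
      refine Finset.disjoint_left.mpr (fun x hx hx' => ?_)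
      simp only [Finset.mem_Icc, Finset.mem_Ioc] at hx hx'
      omega
    have hunion : Finset.Icc n₀ (m + K * p) = Finset.Icc n₀ m ∪ Finset.Ioc m (m + K * p) := by
      ext x
      simp only [Finset.mem_Icc, Finset.mem_Ioc, Finset.mem_union]
      omega
    rw [hunion, Finset.sum_union hdisj]
    congr 1
    have hIoc : Finset.Ioc m (m + K * p) = Finset.Ico (m+1) (m + K * p + 1) := by
      ext x
      simp only [Finset.mem_Ioc, Finset.mem_Ico]
      omega
    rw [hIoc, Finset.sum_Ico_eq_sum_range]
    have hlen : m + K * p + 1 - (m + 1) = K * p := by omega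
    rw [hlen, block_sum (fun i => (-1:ℝ)^(m+1+i) * a (m+1+i)) p K, Finset.sum_comm]
    refine Finset.sum_congr rfl (fun j hj => ?_)
    rw [Finset.mul_sum]
    refine Finset.sum_congr rfl (fun k hk => ?_)
    have e : m + 1 + (k * p + j) = m + 1 + j + k * p := by ring
    rw [e]
    have esign : ((-1:ℝ))^(m + 1 + j + k * p) = (-1:ℝ)^(m+1+j) * (-1:ℝ)^k := by
      rw [pow_add, hppow]
    rw [esign, hb]
    ring
  -- limits
  have hKp : Tendsto (fun K : ℕ => m + K * p) atTop atTop :=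
    tendsto_atTop_mono
      (fun K => le_trans (Nat.le_mul_of_pos_right K (by omega)) (Nat.le_add_left _ _))
      tendsto_id
  have h1 : Tendsto (fun K => ∑ n ∈ Finset.Icc n₀ (m + K * p), (-1:ℝ)^n * a n)
      atTop (nhds S) := hS.comp hKp
  have h2 : Tendsto (fun K => Sm + ∑ j ∈ Finset.range p,
        (-1:ℝ)^(m+1+j) * ∑ i ∈ Finset.range K, (-1:ℝ)^i * b j i)
      atTop (nhds (Sm + ∑ j ∈ Finset.range p, (-1:ℝ)^(m+1+j) * δ j)) :=
    tendsto_const_nhds.add (tendsto_finset_sum _ (fun j _ => (hδt j).const_mul _))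
  have hSeq : S = Sm + ∑ j ∈ Finset.range p, (-1:ℝ)^(m+1+j) * δ j := by
    refine tendsto_nhds_unique ?_ h2
    exact h1.congr (fun K => key K)
  have hmain : (-1:ℝ)^(m+1) * (S - Sm) = ∑ j ∈ Finset.range p, (-1:ℝ)^j * δ j := by
    rw [hSeq]
    have : Sm + ∑ j ∈ Finset.range p, (-1:ℝ)^(m+1+j) * δ j - Sm
        = ∑ j ∈ Finset.range p, (-1:ℝ)^(m+1+j) * δ j := by ring
    rw [this, Finset.mul_sum]
    refine Finset.sum_congr rfl (fun j _ => ?_)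
    have hsq : ((-1:ℝ))^(m+1) * (-1:ℝ)^(m+1) = 1 := by
      rw [← pow_add]
      exact Even.neg_one_pow ⟨m+1, by ring⟩
    rw [pow_add ((-1:ℝ)) (m+1) j]
    linear_combination ((-1:ℝ)^j * δ j) * hsq
  rw [hmain]
  -- termwise bound
  have hterm : ∀ j ∈ Finset.range p, (-1:ℝ)^j * δ j ≤
      (if Even j then a (m + (j+1)) else -(1/2) * a (m + (j+1))) := by
    intro j _
    have hb0 : b j 0 = a (m + (j+1)) := by
      simp only [hb]
      congr 1
      omega
    rcases Nat.even_or_odd j with he | ho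
    · rw [if_pos he, he.neg_one_pow, one_mul, ← hb0]
      exact hδhi j
    · rw [if_neg (Nat.not_even_iff_odd.mpr ho), ho.neg_one_pow, ← hb0]
      have := hδlo j
      linarith
  refine le_trans (Finset.sum_le_sum hterm) ?_
  -- final even/odd split
  have hrange : p = 2 * (ω - 1) + 1 := by omega
  rw [hrange, sum_split (fun t => a (m + t)) (ω - 1)]
  have hω1 : ω - 1 + 1 = ω := by omega
  rw [hω1]
  have eL : ∑ r ∈ Finset.Icc 1 ω, a (m + (2*r-1)) = ∑ r ∈ Finset.Icc 1 ω, a (m + 2*r - 1) := by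
    refine Finset.sum_congr rfl (fun r hr => ?_)
    simp only [Finset.mem_Icc] at hr
    congr 1
    omega
  rw [eL]
end

section
/- Let ω ≥ 1 and let (a_k) be a real sequence with a_k ≠ 0 for k ≥ k₀, such that for all k ≥ k₀ the signs alternate with period ω: sign(a_{k+ω}) = −sign(a_k); and suppose (|a_k|) is Z(ω)-monotonously decreasing for k ≥ k₀ (|a_{k+ω}| ≤ |a_k|) with |a_k| → 0. Then the series ∑_{k=k₀}^∞ a_k converges. -/
open Filter

lemma real_sign_mul_abs (x : ℝ) : Real.sign x * |x| = x := by
  rcases lt_trichotomy x 0 with h | h | h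
  · rw [Real.sign_of_neg h, abs_of_neg h]; ring
  · simp [h]
  · rw [Real.sign_of_pos h, abs_of_pos h]; ring

/-- An `ω`-periodical-single series: if the signs of `a_k` alternate with period
`ω` and `|a_k|` is `Z(ω)`-monotonously decreasing to `0`, then `∑_{k=k₀}^∞ a_k`
converges. -/
theorem periodical_single_series_converges
    (ω k₀ : ℕ) (hω : 1 ≤ ω) (a : ℕ → ℝ)
    (hne : ∀ k : ℕ, k₀ ≤ k → a k ≠ 0)
    (hsign : ∀ k : ℕ, k₀ ≤ k → Real.sign (a (k + ω)) = - Real.sign (a k))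
    (hZ : ∀ k : ℕ, k₀ ≤ k → |a (k + ω)| ≤ |a k|)
    (hlim : Tendsto (fun k => |a k|) atTop (nhds 0)) :
    ∃ S : ℝ, Tendsto (fun m => ∑ k ∈ Finset.Icc k₀ m, a k) atTop (nhds S) := by
  have hωpos : 0 < ω := hω
  -- membership bound for indices
  have hbase : ∀ r j : ℕ, k₀ ≤ k₀ + r + j * ω := fun r j => by
    calc k₀ ≤ k₀ + (r + j * ω) := Nat.le_add_right _ _
    _ = k₀ + r + j * ω := by ring
  -- Step 1: each residue class converges
  have key : ∀ r : ℕ, ∃ L : ℝ,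
      Tendsto (fun n => ∑ j ∈ Finset.range n, a (k₀ + r + j * ω)) atTop (nhds L) := by
    intro r
    set b : ℕ → ℝ := fun j => a (k₀ + r + j * ω) with hb
    have hstep : ∀ j : ℕ, k₀ + r + (j + 1) * ω = (k₀ + r + j * ω) + ω := fun j => by ring
    have hanti : Antitone (fun j => |b j|) := by
      apply antitone_nat_of_succ_le
      intro j
      have := hZ _ (hbase r j)
      simpa [hb, hstep j] using this
    have hten : Tendsto (fun j => |b j|) atTop (nhds 0) := by
      have hmono : Tendsto (fun j => k₀ + r + j * ω) atTop atTop := by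
        apply tendsto_atTop_mono (f := fun j => j) _ tendsto_id
        intro j
        calc j = j * 1 := (mul_one j).symm
        _ ≤ j * ω := Nat.mul_le_mul_left j hω
        _ ≤ k₀ + r + j * ω := Nat.le_add_left _ _
      exact hlim.comp hmono
    have hsgn : ∀ j : ℕ, Real.sign (b j) = (-1) ^ j * Real.sign (b 0) := by
      intro j
      induction j with
      | zero => simp
      | succ j ih =>
        have := hsign _ (hbase r j)
        rw [← hstep j] at this
        rw [hb] at ih ⊢
        simp only at this ⊢
        rw [this, ih]; ring
    obtain ⟨l, hl⟩ := hanti.tendsto_alternating_series_of_tendsto_zero hten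
    refine ⟨Real.sign (b 0) * l, ?_⟩
    have : (fun n => ∑ j ∈ Finset.range n, b j)
        = fun n => Real.sign (b 0) * ∑ j ∈ Finset.range n, (-1) ^ j * |b j| := by
      funext n
      rw [Finset.mul_sum]
      apply Finset.sum_congr rfl
      intro j _
      conv_lhs => rw [← real_sign_mul_abs (b j)]
      rw [hsgn j]; ring
    rw [show (fun n => ∑ j ∈ Finset.range n, a (k₀ + r + j * ω)) = fun n => ∑ j ∈ Finset.range n, b j from rfl, this]
    exact hl.const_mul _
  choose L hL using key
  -- counting function
  set cnt : ℕ → ℕ → ℕ := fun r m => (m + 1 - (k₀ + r) + (ω - 1)) / ω with hcnt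
  have hiff : ∀ r n m : ℕ, n < cnt r m ↔ k₀ + r + n * ω ≤ m := by
    intro r n m
    have h1 : n < cnt r m ↔ (n + 1) * ω ≤ m + 1 - (k₀ + r) + (ω - 1) := by
      rw [hcnt]
      simp only
      rw [Nat.lt_iff_add_one_le, Nat.le_div_iff_mul_le hωpos]
    rw [h1, add_mul, one_mul]
    generalize n * ω = p
    omega
  -- reindexing identity
  have hident : ∀ m : ℕ, ∑ k ∈ Finset.Icc k₀ m, a k
      = ∑ r ∈ Finset.range ω, ∑ j ∈ Finset.range (cnt r m), a (k₀ + r + j * ω) := by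
    intro m
    rw [Finset.sum_sigma']
    symm
    refine Finset.sum_nbij' (fun p => k₀ + p.1 + p.2 * ω)
      (fun k => ⟨(k - k₀) % ω, (k - k₀) / ω⟩) ?_ ?_ ?_ ?_ ?_
    · rintro ⟨r, j⟩ hp
      simp only [Finset.mem_sigma, Finset.mem_range] at hp
      simp only [Finset.mem_Icc]
      exact ⟨hbase r j, (hiff r j m).1 hp.2⟩
    · intro k hk
      simp only [Finset.mem_Icc] at hk
      simp only [Finset.mem_sigma, Finset.mem_range]
      have hdm : (k - k₀) / ω * ω + (k - k₀) % ω = k - k₀ := by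
        rw [mul_comm]; exact Nat.div_add_mod _ _
      refine ⟨Nat.mod_lt _ hωpos, (hiff _ _ m).2 ?_⟩
      generalize (k - k₀) / ω * ω = q at hdm ⊢
      omega
    · rintro ⟨r, j⟩ hp
      simp only [Finset.mem_sigma, Finset.mem_range] at hp
      have h1 : k₀ + r + j * ω - k₀ = r + j * ω := by omega
      have h2 : (r + j * ω) % ω = r := by
        rw [Nat.add_mul_mod_self_right]
        exact Nat.mod_eq_of_lt hp.1
      have h3 : (r + j * ω) / ω = j := by
        rw [Nat.add_mul_div_right _ _ hωpos, Nat.div_eq_of_lt hp.1, zero_add]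
      simp [h1, h2, h3]
    · intro k hk
      simp only [Finset.mem_Icc] at hk
      simp only
      have hdm : (k - k₀) / ω * ω + (k - k₀) % ω = k - k₀ := by
        rw [mul_comm]; exact Nat.div_add_mod _ _
      generalize (k - k₀) / ω * ω = q at hdm ⊢
      omega
    · rintro ⟨r, j⟩ _
      rfl
  -- counting tends to infinity
  have hcnt_top : ∀ r : ℕ, Tendsto (fun m => cnt r m) atTop atTop := by
    intro r
    rw [tendsto_atTop]
    intro N
    rw [eventually_atTop]
    refine ⟨k₀ + r + N * ω, fun m hm => ?_⟩
    rcases Nat.eq_zero_or_pos N with h0 | hNpos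
    · omega
    · have : N - 1 < cnt r m := by
        apply (hiff r (N - 1) m).2
        have : (N - 1) * ω ≤ N * ω := Nat.mul_le_mul_right _ (by omega)
        omega
      omega
  refine ⟨∑ r ∈ Finset.range ω, L r, ?_⟩
  have := tendsto_finset_sum (Finset.range ω)
    (fun r _ => (hL r).comp (hcnt_top r))
  simp only [Function.comp] at this
  convert this using 1
  funext m
  exact hident m
end

section
/- For every natural number m ≥ 2, the remainder of the alternating harmonic series satisfies (1/2)·ln(1 + 1/(m+1)) < |∑_{n=m+1}^∞ (−1)^{n+1}/n| < (1/2)·ln(1 + 1/(m−1)). In particular |∑_{n=m+1}^∞ (−1)^{n+1}/n| ~ 1/(2m) as m → ∞. -/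
open Filter

/-- The remainder `R m = ∑_{n=m+1}^∞ (-1)^(n+1)/n` of the alternating harmonic
series satisfies `(1/2)·ln(1 + 1/(m+1)) < |R m| < (1/2)·ln(1 + 1/(m-1))` for
`m ≥ 2`, and `|R m| ~ 1/(2m)` as `m → ∞`. -/
theorem alternating_harmonic_remainder_estimates
    (R : ℕ → ℝ)
    (hR : ∀ m : ℕ, Tendsto
      (fun N : ℕ => ∑ n ∈ Finset.Icc (m + 1) N, (-1 : ℝ) ^ (n + 1) / (n : ℝ))
      atTop (nhds (R m))) :
    (∀ m : ℕ, 2 ≤ m →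
      (1 / 2) * Real.log (1 + 1 / ((m : ℝ) + 1)) < |R m| ∧
      |R m| < (1 / 2) * Real.log (1 + 1 / ((m : ℝ) - 1))) ∧
    Tendsto (fun m : ℕ => |R m| / (1 / (2 * (m : ℝ)))) atTop (nhds 1) := by
  -- step recurrence
  have hrec : ∀ m : ℕ, R m = (-1 : ℝ) ^ m / ((m : ℝ) + 1) + R (m + 1) := by
    intro m
    refine tendsto_nhds_unique (hR m) ((tendsto_const_nhds.add (hR (m+1))).congr' ?_)
    filter_upwards [eventually_ge_atTop (m+1)] with N hN
    have h1 : Finset.Icc (m+1) N = Finset.Ico (m+1) (N+1) := (Finset.Ico_add_one_right_eq_Icc _ _).symm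
    have h2 : Finset.Icc (m+1+1) N = Finset.Ico (m+2) (N+1) := (Finset.Ico_add_one_right_eq_Icc _ _).symm
    rw [h1, h2, Finset.sum_eq_sum_Ico_succ_bot (show m+1 < N+1 by omega)]
    congr 1
    push_cast
    rw [show m + 1 + 1 = m + 2 from rfl, pow_add]
    norm_num
  -- R tends to 0
  have hsplit : ∀ m : ℕ, R m = R 0 - ∑ n ∈ Finset.Icc 1 m, (-1 : ℝ) ^ (n + 1) / (n : ℝ) := by
    intro m
    refine tendsto_nhds_unique (hR m) (((hR 0).sub tendsto_const_nhds).congr' ?_)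
    filter_upwards [eventually_ge_atTop m] with N hN
    have h1 : Finset.Icc 1 N = Finset.Ico 1 (N+1) := (Finset.Ico_add_one_right_eq_Icc _ _).symm
    have h2 : Finset.Icc 1 m = Finset.Ico 1 (m+1) := (Finset.Ico_add_one_right_eq_Icc _ _).symm
    have h3 : Finset.Icc (m+1) N = Finset.Ico (m+1) (N+1) := (Finset.Ico_add_one_right_eq_Icc _ _).symm
    rw [show (0:ℕ)+1 = 1 from rfl, h1, h2, h3,
      ← Finset.sum_Ico_consecutive _ (show 1 ≤ m+1 by omega) (show m+1 ≤ N+1 by omega)]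
    ring
  have hR0 : Tendsto R atTop (nhds 0) := by
    have h := (tendsto_const_nhds (x := R 0) (f := atTop (α := ℕ))).sub (hR 0)
    rw [sub_self] at h
    refine h.congr fun m => ?_
    rw [hsplit m]
  -- B and its recurrence
  set B : ℕ → ℝ := fun m => (-1 : ℝ) ^ m * R m with hBdef
  have hsq : ∀ m : ℕ, ((-1:ℝ)^m) * ((-1:ℝ)^m) = 1 := by
    intro m; rw [← mul_pow]; norm_num
  have hB : ∀ m : ℕ, B m + B (m+1) = 1 / ((m:ℝ) + 1) := by
    intro m
    simp only [hBdef]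
    rw [hrec m, pow_succ]
    have := hsq m
    field_simp
    nlinarith [this]
  have hRB : ∀ m : ℕ, R m = (-1:ℝ)^m * B m := by
    intro m; simp only [hBdef]; rw [← mul_assoc, hsq m, one_mul]
  -- the pair terms
  set g : ℕ → ℕ → ℝ := fun m k => 1 / ((((m:ℝ) + 2*k + 1)) * ((m:ℝ) + 2*k + 2)) with hgdef
  have hgpos : ∀ m k : ℕ, 0 < g m k := by
    intro m k; simp only [hgdef]; positivity
  have htwo : ∀ m : ℕ, B m = g m 0 + B (m+2) := by
    intro m
    have h1 := hB m
    have h2 := hB (m+1)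
    have hg : g m 0 = 1/((m:ℝ)+1) - 1/((m:ℝ)+2) := by
      simp only [hgdef]
      have hm1 : ((m:ℝ)+1) ≠ 0 := by positivity
      have hm2 : ((m:ℝ)+2) ≠ 0 := by positivity
      field_simp
      ring
    push_cast at h2
    have he : (1:ℝ)/((m:ℝ)+1+1) = 1/((m:ℝ)+2) := by
      rw [show ((m:ℝ)+1+1) = (m:ℝ)+2 by ring]
    rw [hg]; linarith
  -- telescoping
  have htel : ∀ K m : ℕ, B m = (∑ k ∈ Finset.range K, g m k) + B (m + 2*K) := by
    intro K
    induction K with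
    | zero => intro m; simp
    | succ K ih =>
      intro m
      have hshift : ∀ k : ℕ, g m (k+1) = g (m+2) k := by
        intro k; simp only [hgdef]; push_cast; ring_nf
      rw [Finset.sum_range_succ']
      simp only [hshift]
      rw [show m + 2*(K+1) = (m+2) + 2*K by ring, htwo m, ih (m+2)]
      ring
  -- limit of partial sums is B m
  have hBtend : ∀ m : ℕ, Tendsto (fun K => ∑ k ∈ Finset.range K, g m k) atTop (nhds (B m)) := by
    intro m
    have h1 : Tendsto (fun K : ℕ => B (m + 2*K)) atTop (nhds 0) := by
      have hcomp : Tendsto (fun K : ℕ => m + 2*K) atTop atTop :=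
        tendsto_atTop_mono (fun K => by simp only [id_eq]; omega) tendsto_id
      have h2 : Tendsto (fun K : ℕ => R (m + 2*K)) atTop (nhds 0) := hR0.comp hcomp
      have h3 := h2.const_mul ((-1:ℝ)^m)
      rw [mul_zero] at h3
      refine h3.congr fun K => ?_
      simp only [hBdef, pow_add, pow_mul]
      norm_num
    have h2 := (tendsto_const_nhds (x := B m) (f := atTop (α := ℕ))).sub h1
    rw [sub_zero] at h2
    refine h2.congr fun K => ?_
    rw [htel K m]; ring
  -- positivity and monotonicity
  have hBge : ∀ m : ℕ, g m 0 ≤ B m := by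
    intro m
    refine ge_of_tendsto (hBtend m) ?_
    filter_upwards [eventually_ge_atTop 1] with K hK
    exact Finset.single_le_sum (fun k _ => (hgpos m k).le)
      (Finset.mem_range.mpr (by omega))
  have hBpos : ∀ m : ℕ, 0 < B m := fun m => lt_of_lt_of_le (hgpos m 0) (hBge m)
  have hgmono : ∀ m k : ℕ, g (m+1) k ≤ g m k := by
    intro m k
    simp only [hgdef]
    have h1 : (0:ℝ) < ((m:ℝ) + 2*k + 1) * ((m:ℝ) + 2*k + 2) := by positivity
    have h2 : (0:ℝ) < (((m:ℝ)+1) + 2*k + 1) * (((m:ℝ)+1) + 2*k + 2) := by positivity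
    push_cast
    rw [div_le_div_iff₀ h2 h1]
    nlinarith [Nat.cast_nonneg (α := ℝ) m, Nat.cast_nonneg (α := ℝ) k]
  have hBmono : ∀ m : ℕ, B (m+1) < B m := by
    intro m
    have hd : Tendsto (fun K => ∑ k ∈ Finset.range K, (g m k - g (m+1) k)) atTop
        (nhds (B m - B (m+1))) := by
      have := (hBtend m).sub (hBtend (m+1))
      refine this.congr fun K => ?_
      rw [Finset.sum_sub_distrib]
    have hge : g m 0 - g (m+1) 0 ≤ B m - B (m+1) := by
      refine ge_of_tendsto hd ?_
      filter_upwards [eventually_ge_atTop 1] with K hK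
      exact Finset.single_le_sum (fun k _ => sub_nonneg.mpr (hgmono m k))
        (Finset.mem_range.mpr (by omega))
    have hstrict : g (m+1) 0 < g m 0 := by
      simp only [hgdef]
      have h1 : (0:ℝ) < ((m:ℝ) + 2*0 + 1) * ((m:ℝ) + 2*0 + 2) := by positivity
      have h2 : (0:ℝ) < (((m:ℝ)+1) + 2*0 + 1) * (((m:ℝ)+1) + 2*0 + 2) := by positivity
      push_cast
      rw [div_lt_div_iff₀ h2 h1]
      nlinarith [Nat.cast_nonneg (α := ℝ) m]
    linarith
  -- key numeric bounds
  have hkey : ∀ m : ℕ, 1 ≤ m → 1/(2*((m:ℝ)+1)) < B m ∧ B m < 1/(2*(m:ℝ)) := by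
    intro m hm
    constructor
    · have h1 := hB m
      have h2 := hBmono m
      have e : (1:ℝ)/(2*((m:ℝ)+1)) = (1/2) * (1/((m:ℝ)+1)) := by
        rw [one_div, mul_inv, one_div, one_div]
      linarith
    · obtain ⟨p, rfl⟩ : ∃ p, m = p + 1 := ⟨m - 1, by omega⟩
      have h1 := hB p
      have h2 := hBmono p
      push_cast
      have e : (1:ℝ)/(2*((p:ℝ)+1)) = (1/2) * (1/((p:ℝ)+1)) := by
        rw [one_div, mul_inv, one_div, one_div]
      linarith
  have habs : ∀ m : ℕ, |R m| = B m := by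
    intro m
    rw [hRB m, abs_mul, abs_pow, abs_neg, abs_one, one_pow, one_mul, abs_of_pos (hBpos m)]
  constructor
  · intro m hm
    have hm2 : (2:ℝ) ≤ (m:ℝ) := by exact_mod_cast hm
    obtain ⟨hlo, hhi⟩ := hkey m (by omega)
    rw [habs m]
    constructor
    · -- log(1+1/(m+1)) < 1/(m+1)
      have hx : (0:ℝ) < 1 + 1/((m:ℝ)+1) := by positivity
      have hx1 : 1 + 1/((m:ℝ)+1) ≠ 1 := by
        have : (0:ℝ) < 1/((m:ℝ)+1) := by positivity
        linarith
      have hlog := Real.log_lt_sub_one_of_pos hx hx1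
      have h5 : Real.log (1 + 1/((m:ℝ)+1)) < 1/((m:ℝ)+1) := by linarith
      have e : (1:ℝ)/(2*((m:ℝ)+1)) = (1/2) * (1/((m:ℝ)+1)) := by
        rw [one_div, mul_inv, one_div, one_div]
      linarith
    · -- 1/m < log(1+1/(m-1))
      have hm1 : (0:ℝ) < (m:ℝ) - 1 := by linarith
      have hm0 : (0:ℝ) < (m:ℝ) := by linarith
      have hx : (0:ℝ) < ((m:ℝ)-1)/(m:ℝ) := by positivity
      have hx1 : ((m:ℝ)-1)/(m:ℝ) ≠ 1 := by
        intro h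
        rw [div_eq_one_iff_eq (ne_of_gt hm0)] at h
        linarith
      have hlog := Real.log_lt_sub_one_of_pos hx hx1
      rw [Real.log_div (ne_of_gt hm1) (ne_of_gt hm0)] at hlog
      have hval : ((m:ℝ)-1)/(m:ℝ) - 1 = -(1/(m:ℝ)) := by
        field_simp
        ring
      rw [hval] at hlog
      have heq : 1 + 1/((m:ℝ)-1) = (m:ℝ)/((m:ℝ)-1) := by
        field_simp
        ring
      rw [heq, Real.log_div (ne_of_gt hm0) (ne_of_gt hm1)]
      have e : (1:ℝ)/(2*(m:ℝ)) = (1/2) * (1/(m:ℝ)) := by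
        rw [one_div, mul_inv, one_div, one_div]
      linarith
  · -- asymptotics
    have hlow : Tendsto (fun m : ℕ => (m:ℝ)/((m:ℝ)+1)) atTop (nhds 1) := by
      have h := tendsto_one_div_add_atTop_nhds_zero_nat (𝕜 := ℝ)
      have h2 := (tendsto_const_nhds (x := (1:ℝ)) (f := atTop (α := ℕ))).sub h
      rw [sub_zero] at h2
      refine h2.congr fun m => ?_
      have hm1 : ((m:ℝ)+1) ≠ 0 := by positivity
      field_simp
      ring
    refine tendsto_of_tendsto_of_tendsto_of_le_of_le' hlow tendsto_const_nhds ?_ ?_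
    · filter_upwards [eventually_ge_atTop 2] with m hm
      have hm0 : (0:ℝ) < (m:ℝ) := by
        have : (2:ℝ) ≤ (m:ℝ) := by exact_mod_cast hm
        linarith
      rw [habs, show B m / (1/(2*(m:ℝ))) = B m * (2*(m:ℝ)) by
        rw [one_div, div_eq_mul_inv, inv_inv]]
      have h1 := (hkey m (by omega)).1
      have h2 := mul_le_mul_of_nonneg_right h1.le (show (0:ℝ) ≤ 2*(m:ℝ) by positivity)
      have e : (1:ℝ)/(2*((m:ℝ)+1)) * (2*(m:ℝ)) = (m:ℝ)/((m:ℝ)+1) := by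
        have : ((m:ℝ)+1) ≠ 0 := by positivity
        field_simp
      rw [e] at h2
      exact h2
    · filter_upwards [eventually_ge_atTop 2] with m hm
      have hm0 : (0:ℝ) < (m:ℝ) := by
        have : (2:ℝ) ≤ (m:ℝ) := by exact_mod_cast hm
        linarith
      rw [habs, show B m / (1/(2*(m:ℝ))) = B m * (2*(m:ℝ)) by
        rw [one_div, div_eq_mul_inv, inv_inv]]
      have h1 := (hkey m (by omega)).2
      have h2 := mul_le_mul_of_nonneg_right h1.le (show (0:ℝ) ≤ 2*(m:ℝ) by positivity)
      have e : (1:ℝ)/(2*(m:ℝ)) * (2*(m:ℝ)) = 1 := by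
        field_simp
      rw [e] at h2
      exact h2
end

section
/- Define the real sequence (a_n)_{n≥1} by: a_{6k−5} = 1/k + 1/2^k, a_{6k−4} = 1/10^k, a_{6k−3} = 1/k + 1/2^k, a_{6k−2} = 1/k, a_{6k−1} = 1/10^k, a_{6k} = 1/k, for k ≥ 1. Then (a_n) is Z(3)-monotonously decreasing (a_{n+3} ≤ a_n for all n ≥ 1), a_n → 0, the series ∑_{n=1}^∞ (−1)^{n+1} a_n converges with sum S = 2, and the partial sums satisfy S_{6k} = 2(1 − 1/2^k), so that the remainder satisfies R_{6k} = S − S_{6k} = 1/2^{k−1}. -/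
open Filter

lemma Z3aux_natkey : ∀ k : ℕ, k * (k+1) ≤ 2 ^ (k+1) := by
  intro k
  induction k with
  | zero => simp
  | succ n ih =>
    match n, ih with
    | 0, _ => decide
    | 1, _ => decide
    | (m+2), ih =>
      have h2 : 2^(m+2+1+1) = 2*2^(m+2+1) := by ring
      nlinarith [ih]

lemma Z3aux_key : ∀ k : ℕ, 1 ≤ k → (1:ℝ)/((k:ℝ)+1) + 1/2^(k+1) ≤ 1/k := by
  intro k hk
  have hk' : (1:ℝ) ≤ k := by exact_mod_cast hk
  have h2 : (0:ℝ) < 2^(k+1) := by positivity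
  have hn : ((k:ℝ)) * (k+1) ≤ 2^(k+1) := by exact_mod_cast Z3aux_natkey k
  rw [div_add_div _ _ (by positivity) h2.ne', div_le_div_iff₀ (by positivity) (by linarith)]
  nlinarith

lemma Z3aux_twopow : ∀ k : ℕ, 1 ≤ k → (1:ℝ)/2^k ≤ 1/k := by
  intro k hk
  have : (k:ℝ) ≤ 2^k := by exact_mod_cast (Nat.lt_two_pow_self (n := k)).le
  exact one_div_le_one_div_of_le (by exact_mod_cast hk) this

lemma Z3aux_tenpow : ∀ k : ℕ, 1 ≤ k → (1:ℝ)/10^k ≤ 1/k := by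
  intro k hk
  have h2 : (k:ℝ) ≤ 2^k := by exact_mod_cast (Nat.lt_two_pow_self (n := k)).le
  have : (k:ℝ) ≤ 10^k := le_trans h2 (by gcongr; norm_num)
  exact one_div_le_one_div_of_le (by exact_mod_cast hk) this

lemma Z3aux_split6 : ∀ n : ℕ, 1 ≤ n → ∃ k, 1 ≤ k ∧
    (n = 6*k-5 ∨ n = 6*k-4 ∨ n = 6*k-3 ∨ n = 6*k-2 ∨ n = 6*k-1 ∨ n = 6*k) := by
  intro n hn
  exact ⟨(n+5)/6, by omega⟩

/-- The blockwise-defined sequence is `Z(3)`-monotonously decreasing, tends to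
`0`, its alternating series converges to `2`, and `S_{6k} = 2(1 - 1/2^k)`, i.e.
`R_{6k} = 1/2^(k-1)`. -/
theorem Z3_series_example
    (a : ℕ → ℝ)
    (h1 : ∀ k : ℕ, 1 ≤ k → a (6 * k - 5) = 1 / (k : ℝ) + 1 / 2 ^ k)
    (h2 : ∀ k : ℕ, 1 ≤ k → a (6 * k - 4) = 1 / 10 ^ k)
    (h3 : ∀ k : ℕ, 1 ≤ k → a (6 * k - 3) = 1 / (k : ℝ) + 1 / 2 ^ k)
    (h4 : ∀ k : ℕ, 1 ≤ k → a (6 * k - 2) = 1 / (k : ℝ))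
    (h5 : ∀ k : ℕ, 1 ≤ k → a (6 * k - 1) = 1 / 10 ^ k)
    (h6 : ∀ k : ℕ, 1 ≤ k → a (6 * k) = 1 / (k : ℝ)) :
    (∀ n : ℕ, 1 ≤ n → a (n + 3) ≤ a n) ∧
    Tendsto a atTop (nhds 0) ∧
    Tendsto (fun m => ∑ n ∈ Finset.Icc 1 m, (-1 : ℝ) ^ (n + 1) * a n)
      atTop (nhds 2) ∧
    (∀ k : ℕ, 1 ≤ k →
      ∑ n ∈ Finset.Icc 1 (6 * k), (-1 : ℝ) ^ (n + 1) * a n = 2 * (1 - 1 / 2 ^ k)) ∧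
    (∀ k : ℕ, 1 ≤ k →
      2 - ∑ n ∈ Finset.Icc 1 (6 * k), (-1 : ℝ) ^ (n + 1) * a n = 1 / 2 ^ (k - 1)) := by
  -- rewriting lemmas at shifted indices
  have e1 : ∀ k : ℕ, a (6*k+1) = 1/((k:ℝ)+1) + 1/2^(k+1) := by
    intro k
    have h := h1 (k+1) (by omega)
    rw [show 6*(k+1)-5 = 6*k+1 by omega] at h
    rw [h]; push_cast; ring
  have e2 : ∀ k : ℕ, a (6*k+2) = 1/(10:ℝ)^(k+1) := by
    intro k
    have h := h2 (k+1) (by omega)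
    rwa [show 6*(k+1)-4 = 6*k+2 by omega] at h
  have e3 : ∀ k : ℕ, a (6*k+3) = 1/((k:ℝ)+1) + 1/2^(k+1) := by
    intro k
    have h := h3 (k+1) (by omega)
    rw [show 6*(k+1)-3 = 6*k+3 by omega] at h
    rw [h]; push_cast; ring
  have e4 : ∀ k : ℕ, a (6*k+4) = 1/((k:ℝ)+1) := by
    intro k
    have h := h4 (k+1) (by omega)
    rw [show 6*(k+1)-2 = 6*k+4 by omega] at h
    rw [h]; push_cast; ring
  have e5 : ∀ k : ℕ, a (6*k+5) = 1/(10:ℝ)^(k+1) := by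
    intro k
    have h := h5 (k+1) (by omega)
    rwa [show 6*(k+1)-1 = 6*k+5 by omega] at h
  have e6 : ∀ k : ℕ, a (6*k+6) = 1/((k:ℝ)+1) := by
    intro k
    have h := h6 (k+1) (by omega)
    rw [show 6*(k+1) = 6*k+6 by omega] at h
    rw [h]; push_cast; ring
  -- Z(3)-monotonicity
  have hZ : ∀ n : ℕ, 1 ≤ n → a (n + 3) ≤ a n := by
    intro n hn
    obtain ⟨k, hk, hc⟩ := Z3aux_split6 n hn
    have hk' : (1:ℝ) ≤ k := by exact_mod_cast hk
    have hkpos : (0:ℝ) < k := by linarith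
    obtain ⟨j, rfl⟩ : ∃ j, k = j + 1 := ⟨k - 1, by omega⟩
    rcases hc with rfl | rfl | rfl | rfl | rfl | rfl
    · rw [show 6*(j+1)-5+3 = 6*j+4 by omega, show 6*(j+1)-5 = 6*j+1 by omega,
        e4 j, e1 j]
      have : (0:ℝ) ≤ 1/2^(j+1) := by positivity
      linarith
    · rw [show 6*(j+1)-4+3 = 6*j+5 by omega, show 6*(j+1)-4 = 6*j+2 by omega,
        e5 j, e2 j]
    · rw [show 6*(j+1)-3+3 = 6*j+6 by omega, show 6*(j+1)-3 = 6*j+3 by omega,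
        e6 j, e3 j]
      have : (0:ℝ) ≤ 1/2^(j+1) := by positivity
      linarith
    · rw [show 6*(j+1)-2+3 = 6*(j+1)+1 by omega, show 6*(j+1)-2 = 6*j+4 by omega,
        e1 (j+1), e4 j]
      have := Z3aux_key (j+1) (by omega)
      push_cast at this ⊢
      linarith
    · rw [show 6*(j+1)-1+3 = 6*(j+1)+2 by omega, show 6*(j+1)-1 = 6*j+5 by omega,
        e2 (j+1), e5 j]
      gcongr
      · norm_num
      · omega
    · rw [show 6*(j+1)+3 = 6*(j+1)+3 by omega, show 6*(j+1) = 6*j+6 by omega,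
        show 6*j+6+3 = 6*(j+1)+3 by omega, e3 (j+1), e6 j]
      have := Z3aux_key (j+1) (by omega)
      push_cast at this ⊢
      linarith
  -- bounds: 0 ≤ a n and a n ≤ 2/k with n ≤ 6k
  have hcase : ∀ n : ℕ, 1 ≤ n → ∃ k : ℕ, 1 ≤ k ∧ n ≤ 6*k ∧ 0 ≤ a n ∧ a n ≤ 2/(k:ℝ) := by
    intro n hn
    obtain ⟨k, hk, hc⟩ := Z3aux_split6 n hn
    refine ⟨k, hk, by omega, ?_⟩
    have hk' : (1:ℝ) ≤ k := by exact_mod_cast hk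
    have hkpos : (0:ℝ) < k := by linarith
    have h2p := Z3aux_twopow k hk
    have h10p := Z3aux_tenpow k hk
    have hik : (0:ℝ) ≤ 1/k := by positivity
    have h2eq : 2/(k:ℝ) = 1/(k:ℝ) + 1/(k:ℝ) := by ring
    obtain ⟨j, rfl⟩ : ∃ j, k = j + 1 := ⟨k - 1, by omega⟩
    rcases hc with rfl | rfl | rfl | rfl | rfl | rfl
    · rw [show 6*(j+1)-5 = 6*j+1 by omega, e1 j]; push_cast at *
      constructor <;> [positivity; linarith]
    · rw [show 6*(j+1)-4 = 6*j+2 by omega, e2 j]; push_cast at *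
      constructor <;> [positivity; linarith]
    · rw [show 6*(j+1)-3 = 6*j+3 by omega, e3 j]; push_cast at *
      constructor <;> [positivity; linarith]
    · rw [show 6*(j+1)-2 = 6*j+4 by omega, e4 j]; push_cast at *
      constructor <;> [positivity; linarith]
    · rw [show 6*(j+1)-1 = 6*j+5 by omega, e5 j]; push_cast at *
      constructor <;> [positivity; linarith]
    · rw [show 6*(j+1) = 6*j+6 by omega, e6 j]; push_cast at *
      constructor <;> [positivity; linarith]
  have hbound : ∀ n : ℕ, 1 ≤ n → 0 ≤ a n ∧ a n ≤ 12/(n:ℝ) := by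
    intro n hn
    obtain ⟨k, hk, hnk, h0, h2k⟩ := hcase n hn
    refine ⟨h0, h2k.trans ?_⟩
    have hk' : (0:ℝ) < k := by exact_mod_cast hk
    have hn' : (0:ℝ) < n := by exact_mod_cast hn
    rw [div_le_div_iff₀ hk' hn']
    have : (n:ℝ) ≤ 6*k := by exact_mod_cast hnk
    nlinarith
  -- a → 0
  have hT0 : Tendsto a atTop (nhds 0) := by
    apply squeeze_zero' (f := a) (g := fun n : ℕ => 12/(n:ℝ))
    · filter_upwards [eventually_ge_atTop 1] with n hn using (hbound n hn).1
    · filter_upwards [eventually_ge_atTop 1] with n hn using (hbound n hn).2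
    · exact tendsto_const_div_atTop_nhds_zero_nat 12
  -- partial sums at multiples of 6
  have hS : ∀ k : ℕ, ∑ n ∈ Finset.Icc 1 (6*k), (-1:ℝ)^(n+1) * a n = 2*(1 - 1/2^k) := by
    intro k
    induction k with
    | zero => simp
    | succ k ih =>
      rw [show 6*(k+1) = 6*k+5+1 by ring, Finset.sum_Icc_succ_top (by omega),
        show 6*k+5 = 6*k+4+1 by ring, Finset.sum_Icc_succ_top (by omega),
        show 6*k+4 = 6*k+3+1 by ring, Finset.sum_Icc_succ_top (by omega),
        show 6*k+3 = 6*k+2+1 by ring, Finset.sum_Icc_succ_top (by omega),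
        show 6*k+2 = 6*k+1+1 by ring, Finset.sum_Icc_succ_top (by omega),
        show 6*k+1 = 6*k+0+1 by ring, Finset.sum_Icc_succ_top (by omega)]
      rw [show 6*k+0 = 6*k by ring, ih]
      rw [show 6*k+0+1 = 6*k+1 by ring, show 6*k+1+1 = 6*k+2 by ring,
        show 6*k+2+1 = 6*k+3 by ring, show 6*k+3+1 = 6*k+4 by ring,
        show 6*k+4+1 = 6*k+5 by ring, show 6*k+5+1 = 6*k+6 by ring]
      rw [e1 k, e2 k, e3 k, e4 k, e5 k, e6 k]
      have s1 : (-1:ℝ)^(6*k+1+1) = 1 := Even.neg_one_pow ⟨3*k+1, by ring⟩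
      have s2 : (-1:ℝ)^(6*k+2+1) = -1 := Odd.neg_one_pow ⟨3*k+1, by ring⟩
      have s3 : (-1:ℝ)^(6*k+3+1) = 1 := Even.neg_one_pow ⟨3*k+2, by ring⟩
      have s4 : (-1:ℝ)^(6*k+4+1) = -1 := Odd.neg_one_pow ⟨3*k+2, by ring⟩
      have s5 : (-1:ℝ)^(6*k+5+1) = 1 := Even.neg_one_pow ⟨3*k+3, by ring⟩
      have s6 : (-1:ℝ)^(6*k+6+1) = -1 := Odd.neg_one_pow ⟨3*k+3, by ring⟩
      rw [s1, s2, s3, s4, s5, s6]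
      have hk0 : ((k:ℝ)+1) ≠ 0 := by positivity
      have h2k : (2:ℝ)^(k+1) ≠ 0 := by positivity
      have h10k : (10:ℝ)^(k+1) ≠ 0 := by positivity
      field_simp
      ring
  -- part 4
  have hS4 : ∀ k : ℕ, 1 ≤ k →
      ∑ n ∈ Finset.Icc 1 (6*k), (-1:ℝ)^(n+1) * a n = 2*(1 - 1/2^k) := fun k _ => hS k
  -- part 3: convergence of the partial sums to 2
  have hT2 : Tendsto (fun m => ∑ n ∈ Finset.Icc 1 m, (-1:ℝ)^(n+1) * a n)
      atTop (nhds 2) := by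
    rw [Metric.tendsto_atTop]
    intro ε hε
    obtain ⟨k₀, hk₀⟩ := exists_nat_gt (12/ε)
    refine ⟨6*(max k₀ 1), fun m hm => ?_⟩
    set K := max k₀ 1 with hK
    have hK1 : 1 ≤ K := le_max_right _ _
    set k := m / 6 with hk
    have hkK : K ≤ k := by omega
    have hk1 : 1 ≤ k := le_trans hK1 hkK
    have h6k : 6*k ≤ m := by omega
    have h6k5 : m ≤ 6*k + 5 := by omega
    have hkpos : (0:ℝ) < k := by exact_mod_cast hk1
    -- split the sum
    have hsplit : (∑ n ∈ Finset.Ioc 0 (6*k), (-1:ℝ)^(n+1) * a n)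
        + (∑ n ∈ Finset.Ioc (6*k) m, (-1:ℝ)^(n+1) * a n)
        = ∑ n ∈ Finset.Ioc 0 m, (-1:ℝ)^(n+1) * a n :=
      Finset.sum_Ioc_consecutive _ (by omega) h6k
    have hIcc : ∀ m : ℕ, Finset.Icc 1 m = Finset.Ioc 0 m := by
      intro m; rw [← Finset.Icc_add_one_left_eq_Ioc, zero_add]
    -- tail bound
    have htail : |∑ n ∈ Finset.Ioc (6*k) m, (-1:ℝ)^(n+1) * a n| ≤ 10/k := by
      calc |∑ n ∈ Finset.Ioc (6*k) m, (-1:ℝ)^(n+1) * a n|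
          ≤ ∑ n ∈ Finset.Ioc (6*k) m, |(-1:ℝ)^(n+1) * a n| :=
            Finset.abs_sum_le_sum_abs _ _
        _ ≤ ∑ n ∈ Finset.Ioc (6*k) m, 2/(k:ℝ) := by
            apply Finset.sum_le_sum
            intro n hn
            rw [Finset.mem_Ioc] at hn
            have hn1 : 1 ≤ n := by omega
            obtain ⟨h0, h12⟩ := hbound n hn1
            rw [abs_mul, abs_pow, abs_neg, abs_one, one_pow, one_mul, abs_of_nonneg h0]
            refine h12.trans ?_
            have hn' : (0:ℝ) < n := by exact_mod_cast hn1
            rw [div_le_div_iff₀ hn' hkpos]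
            have : (6:ℝ)*k < n := by exact_mod_cast hn.1
            nlinarith
        _ = ((m - 6*k : ℕ):ℝ) * (2/(k:ℝ)) := by
            rw [Finset.sum_const, Nat.card_Ioc, nsmul_eq_mul]
        _ ≤ 5 * (2/(k:ℝ)) := by
            have h5 : ((m - 6*k : ℕ):ℝ) ≤ 5 := by exact_mod_cast (by omega : m - 6*k ≤ 5)
            have h0 : (0:ℝ) ≤ 2/(k:ℝ) := by positivity
            exact mul_le_mul_of_nonneg_right h5 h0
        _ = 10/k := by ring
    -- head bound
    have hhead : |(∑ n ∈ Finset.Ioc 0 (6*k), (-1:ℝ)^(n+1) * a n) - 2| ≤ 2/k := by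
      rw [← hIcc, hS k]
      have h2p : (1:ℝ)/2^k ≤ 1/k := Z3aux_twopow k hk1
      have heq : 2*(1-1/2^k) - 2 = -(2*(1/(2:ℝ)^k)) := by ring
      rw [heq, abs_neg, abs_of_nonneg (by positivity)]
      calc 2*(1/(2:ℝ)^k) ≤ 2*(1/(k:ℝ)) := by linarith
        _ = 2/(k:ℝ) := by ring
    have hfinal : |(∑ n ∈ Finset.Icc 1 m, (-1:ℝ)^(n+1) * a n) - 2| ≤ 12/k := by
      rw [hIcc, ← hsplit]
      calc |(∑ n ∈ Finset.Ioc 0 (6*k), (-1:ℝ)^(n+1) * a n)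
            + (∑ n ∈ Finset.Ioc (6*k) m, (-1:ℝ)^(n+1) * a n) - 2|
          ≤ |(∑ n ∈ Finset.Ioc 0 (6*k), (-1:ℝ)^(n+1) * a n) - 2|
            + |∑ n ∈ Finset.Ioc (6*k) m, (-1:ℝ)^(n+1) * a n| := by
            rw [add_sub_right_comm]; exact abs_add_le _ _
        _ ≤ 2/k + 10/k := add_le_add hhead htail
        _ = 12/k := by ring
    rw [Real.dist_eq]
    refine lt_of_le_of_lt hfinal ?_
    have hKk : (K:ℝ) ≤ k := by exact_mod_cast hkK
    have hKpos : (0:ℝ) < K := by exact_mod_cast hK1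
    have hk₀K : (k₀:ℝ) ≤ K := by exact_mod_cast le_max_left k₀ 1
    have h12K : 12/ε < K := lt_of_lt_of_le hk₀ hk₀K
    calc (12:ℝ)/k ≤ 12/K := by apply div_le_div_of_nonneg_left (by norm_num) hKpos hKk
      _ < ε := by
          rw [div_lt_iff₀ hKpos]
          have := (div_lt_iff₀ hε).mp h12K
          nlinarith
  refine ⟨hZ, hT0, hT2, hS4, ?_⟩
  intro k hk
  rw [hS k]
  obtain ⟨j, rfl⟩ : ∃ j, k = j + 1 := ⟨k - 1, by omega⟩
  rw [show j+1-1 = j by omega, pow_succ]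
  have : (2:ℝ)^j ≠ 0 := by positivity
  field_simp
  ring
end
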